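/- arXiv:0704.3086 — 3 statements merged into one kernel-verified Lean document; each statement's English description precedes it below -/
import Mathlib

section
/- The Fourier symbol bound: the quantity c(k) := Σ_{k' ∈ k + (2πZ)^d} (1/(-L̂)(k)) · ((-Δ̂)(k')/(1 + (-Δ̂)(k'))) · Π_{j=1}^d (2 sin(k'_j/2)/k'_j)² is uniformly bounded over k in the set B := {k ∈ [-π,π]^d : k_j ≠ 0 for all j}. -/
open MeasureTheory Real Filter ProbabilityTheory
open scoped ENNReal NNReal

noncomputable section

variable {d : ℕ}

/-- The Fourier symbol `(-L̂)(k) = 4 Σ_j sin²(k_j/2)` of the negative discrete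
Laplacian on `ℤ^d`. -/
def dSym (d : ℕ) (k : Fin d → ℝ) : ℝ := 4 * ∑ j, Real.sin (k j / 2) ^ 2

/-- The quantity
`c(k) = Σ_{k' ∈ k + (2πℤ)^d} (1/(-L̂)(k)) ((-Δ̂)(k')/(1+(-Δ̂)(k'))) Π_j (2 sin(k'_j/2)/k'_j)²`,
where `(-Δ̂)(k') = |k'|²`. -/
def ck (d : ℕ) (k : Fin d → ℝ) : ℝ :=
  ∑' ℓ : Fin d → ℤ,
    (1 / dSym d k) *
      ((∑ j, (k j + 2 * Real.pi * ℓ j) ^ 2) / (1 + ∑ j, (k j + 2 * Real.pi * ℓ j) ^ 2)) *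
      ∏ j, (2 * Real.sin ((k j + 2 * Real.pi * ℓ j) / 2) / (k j + 2 * Real.pi * ℓ j)) ^ 2

/-- Auxiliary comparison function used to dominate the summand. -/
def hfun (j₀ j : Fin d) (n : ℤ) : ℝ :=
  if j = j₀ then (Real.pi ^ 2 * (n : ℝ) ^ 2)⁻¹
  else if n = 0 then 1 else 4 * (Real.pi ^ 2 * (n : ℝ) ^ 2)⁻¹

lemma hfun_diag (j₀ : Fin d) (n : ℤ) :
    hfun j₀ j₀ n = (Real.pi ^ 2 * (n : ℝ) ^ 2)⁻¹ := by simp [hfun]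

lemma hfun_off {j₀ j : Fin d} (h : j ≠ j₀) (n : ℤ) :
    hfun j₀ j n = if n = 0 then 1 else 4 * (Real.pi ^ 2 * (n : ℝ) ^ 2)⁻¹ := by
  simp [hfun, h]

lemma hfun_nonneg (j₀ j : Fin d) (n : ℤ) : 0 ≤ hfun j₀ j n := by
  unfold hfun; split_ifs <;> positivity

/-- Partial sums of `1/m²` over `ℕ` are at most `2`. -/
lemma sum_nat_sq_inv_le (w : Finset ℕ) : ∑ m ∈ w, ((m : ℝ) ^ 2)⁻¹ ≤ 2 := by
  have hs : Summable (fun m : ℕ => ((m : ℝ) ^ 2)⁻¹) := by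
    simpa [one_div] using hasSum_zeta_two.summable
  calc ∑ m ∈ w, ((m : ℝ) ^ 2)⁻¹ ≤ ∑' m : ℕ, ((m : ℝ) ^ 2)⁻¹ :=
        Summable.sum_le_tsum w (fun i _ => by positivity) hs
    _ = Real.pi ^ 2 / 6 := by simpa [one_div] using hasSum_zeta_two.tsum_eq
    _ ≤ 2 := by nlinarith [Real.pi_lt_d2, Real.pi_pos]

/-- Partial sums of `1/n²` over `ℤ` are at most `4`. -/
lemma sum_int_sq_inv_le (u : Finset ℤ) : ∑ n ∈ u, ((n : ℝ) ^ 2)⁻¹ ≤ 4 := by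
  rw [← Finset.sum_filter_add_sum_filter_not u (0 ≤ ·)]
  have h1 : ∑ n ∈ u.filter (0 ≤ ·), ((n : ℝ) ^ 2)⁻¹ ≤ 2 := by
    refine le_trans (le_of_eq ?_)
      (sum_nat_sq_inv_le ((u.filter (0 ≤ ·)).image Int.toNat))
    rw [Finset.sum_image]
    · refine Finset.sum_congr rfl fun n hn => ?_
      have hn' := (Finset.mem_filter.mp hn).2
      have hcast : ((n.toNat : ℝ)) = (n : ℝ) := by
        exact_mod_cast Int.toNat_of_nonneg hn'
      rw [hcast]
    · intro a ha b hb hab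
      have ha' := (Finset.mem_filter.mp ha).2
      have hb' := (Finset.mem_filter.mp hb).2
      omega
  have h2 : ∑ n ∈ u.filter (fun n => ¬ 0 ≤ n), ((n : ℝ) ^ 2)⁻¹ ≤ 2 := by
    refine le_trans (le_of_eq ?_)
      (sum_nat_sq_inv_le ((u.filter (fun n => ¬ 0 ≤ n)).image (fun n => (-n).toNat)))
    rw [Finset.sum_image]
    · refine Finset.sum_congr rfl fun n hn => ?_
      have hn' := (Finset.mem_filter.mp hn).2
      have h0 : (0:ℤ) ≤ -n := by omega
      have hcast : (((-n).toNat : ℝ)) = ((-n : ℤ) : ℝ) := by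
        exact_mod_cast Int.toNat_of_nonneg h0
      rw [hcast]
      push_cast
      ring
    · intro a ha b hb hab
      have ha' := (Finset.mem_filter.mp ha).2
      have hb' := (Finset.mem_filter.mp hb).2
      simp only at hab
      omega
  linarith

/-- Column sums of the comparison function are at most `3`. -/
lemma hfun_col_sum_le (j₀ j : Fin d) (u : Finset ℤ) : ∑ n ∈ u, hfun j₀ j n ≤ 3 := by
  have hπ := Real.pi_gt_three
  have hπ2 : (9 : ℝ) ≤ Real.pi ^ 2 := by nlinarith
  have h9 : (Real.pi ^ 2)⁻¹ ≤ (9:ℝ)⁻¹ := by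
    apply inv_anti₀ <;> nlinarith
  have h0 : (0:ℝ) ≤ (Real.pi ^ 2)⁻¹ := by positivity
  have hsum := sum_int_sq_inv_le u
  have hsum0 : (0:ℝ) ≤ ∑ n ∈ u, ((n : ℝ) ^ 2)⁻¹ :=
    Finset.sum_nonneg fun n _ => by positivity
  by_cases hj : j = j₀
  · simp only [hfun, if_pos hj]
    have heq : ∑ n ∈ u, (Real.pi ^ 2 * (n : ℝ) ^ 2)⁻¹
        = (Real.pi ^ 2)⁻¹ * ∑ n ∈ u, ((n : ℝ) ^ 2)⁻¹ := by
      rw [Finset.mul_sum]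
      exact Finset.sum_congr rfl fun n _ => by rw [mul_inv]
    rw [heq]
    have h1 : (Real.pi ^ 2)⁻¹ * ∑ n ∈ u, ((n : ℝ) ^ 2)⁻¹ ≤ (9:ℝ)⁻¹ * 4 :=
      mul_le_mul h9 hsum hsum0 (by norm_num)
    nlinarith
  · simp only [hfun, if_neg hj]
    have hpt : ∀ n : ℤ, (if n = 0 then (1:ℝ) else 4 * (Real.pi ^ 2 * (n : ℝ) ^ 2)⁻¹)
        ≤ (if n = 0 then (1:ℝ) else 0) + 4 * (Real.pi ^ 2 * (n : ℝ) ^ 2)⁻¹ := by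
      intro n
      by_cases hn : n = 0
      · simp [hn]
      · simp [hn]
    calc ∑ n ∈ u, (if n = 0 then (1:ℝ) else 4 * (Real.pi ^ 2 * (n : ℝ) ^ 2)⁻¹)
        ≤ ∑ n ∈ u, ((if n = 0 then (1:ℝ) else 0) + 4 * (Real.pi ^ 2 * (n : ℝ) ^ 2)⁻¹) :=
          Finset.sum_le_sum fun n _ => hpt n
      _ = (∑ n ∈ u, (if n = 0 then (1:ℝ) else 0))
          + 4 * ((Real.pi ^ 2)⁻¹ * ∑ n ∈ u, ((n : ℝ) ^ 2)⁻¹) := by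
          rw [Finset.sum_add_distrib]
          congr 1
          rw [Finset.mul_sum, Finset.mul_sum]
          exact Finset.sum_congr rfl fun n _ => by rw [mul_inv]
      _ ≤ 1 + 4 * ((9:ℝ)⁻¹ * 4) := by
          have h1 : (∑ n ∈ u, (if n = 0 then (1:ℝ) else 0)) ≤ 1 := by
            rw [Finset.sum_ite_eq' u 0 (fun _ => (1:ℝ))]
            split_ifs <;> norm_num
          have h2 : (Real.pi ^ 2)⁻¹ * ∑ n ∈ u, ((n : ℝ) ^ 2)⁻¹ ≤ (9:ℝ)⁻¹ * 4 :=
            mul_le_mul h9 hsum hsum0 (by norm_num)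
          linarith
      _ ≤ 3 := by norm_num

/-- Denominator lower bound: for `|k| ≤ π` and `n ≠ 0`, `(k + 2πn)² ≥ π²n²`. -/
lemma denom_ge {k : ℝ} (hk : |k| ≤ Real.pi) {n : ℤ} (hn : n ≠ 0) :
    Real.pi ^ 2 * (n : ℝ) ^ 2 ≤ (k + 2 * Real.pi * n) ^ 2 := by
  have hπ := Real.pi_pos
  have hk' := abs_le.mp hk
  have h1 : (1:ℤ) ≤ |n| := Int.one_le_abs hn
  have h1' : (1:ℝ) ≤ |(n:ℝ)| := by
    rw [← Int.cast_abs]; exact_mod_cast h1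
  rcases abs_cases (n:ℝ) with ⟨heq, _⟩ | ⟨heq, _⟩
  · have hn1 : (1:ℝ) ≤ (n:ℝ) := by rw [heq] at h1'; exact h1'
    have ha : (0:ℝ) ≤ k + Real.pi * n := by nlinarith
    have hb : (0:ℝ) ≤ k + 3 * Real.pi * n := by nlinarith
    nlinarith [mul_nonneg ha hb]
  · have hn1 : (n:ℝ) ≤ -1 := by rw [heq] at h1'; linarith
    have ha : k + Real.pi * n ≤ 0 := by nlinarith
    have hb : k + 3 * Real.pi * n ≤ 0 := by nlinarith
    nlinarith [mul_nonneg (neg_nonneg.mpr ha) (neg_nonneg.mpr hb)]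

set_option maxHeartbeats 1000000
/-- Uniform bound on the Fourier symbol ratio.
The quantity `c(k)` is uniformly bounded over the set
`B = {k ∈ [-π,π]^d : k_j ≠ 0 for all j}`. -/
theorem ck_uniformly_bounded (d : ℕ) :
    ∃ C : ℝ, ∀ k : Fin d → ℝ,
      (∀ j, |k j| ≤ Real.pi ∧ k j ≠ 0) → ck d k ≤ C := by
  have hπ := Real.pi_pos
  refine ⟨Real.pi ^ 2 / 4 + d * 3 ^ d, fun k hk => ?_⟩
  have hC : (0:ℝ) ≤ Real.pi ^ 2 / 4 + d * 3 ^ d := by positivity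
  rcases Nat.eq_zero_or_pos d with hd | hd
  · subst hd
    have : ck 0 k = 0 := by simp [ck, dSym]
    rw [this]; exact hC
  -- basic facts about k
  have hsin2 : ∀ j, 0 < Real.sin (k j / 2) ^ 2 := by
    intro j
    obtain ⟨hb, hne⟩ := hk j
    have hb' := abs_le.mp hb
    have h0 : Real.sin (k j / 2) ≠ 0 := by
      intro hc
      have h1 : -Real.pi < k j / 2 := by linarith
      have h2 : k j / 2 < Real.pi := by linarith
      have := (Real.sin_eq_zero_iff_of_lt_of_lt h1 h2).mp hc
      exact hne (by linarith)
    positivity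
  rw [ck]
  obtain ⟨S, hSdef⟩ : ∃ S : ℝ, S = ∑ j, Real.sin (k j / 2) ^ 2 := ⟨_, rfl⟩
  have hSpos : 0 < S := by
    rw [hSdef]
    exact Finset.sum_pos (fun j _ => hsin2 j) ⟨⟨0, hd⟩, Finset.mem_univ _⟩
  have hSne : S ≠ 0 := ne_of_gt hSpos
  have hs2S : ∀ j, Real.sin (k j / 2) ^ 2 ≤ S := by
    rw [hSdef]
    exact fun j => Finset.single_le_sum (fun i _ => (hsin2 i).le) (Finset.mem_univ j)
  have h4s : ∀ j, 4 * Real.sin (k j / 2) ^ 2 ≤ (k j) ^ 2 := by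
    intro j
    have h := Real.abs_sin_le_abs (x := k j / 2)
    rw [abs_div, abs_two] at h
    rw [← sq_abs (Real.sin (k j / 2)), ← sq_abs (k j)]
    nlinarith [abs_nonneg (Real.sin (k j / 2)), abs_nonneg (k j)]
  have hks : ∀ j, (k j) ^ 2 ≤ Real.pi ^ 2 * Real.sin (k j / 2) ^ 2 := by
    intro j
    obtain ⟨hb, hne⟩ := hk j
    have hb' := abs_le.mp hb
    have h3 : Real.sin (|k j| / 2) = |Real.sin (k j / 2)| := by
      rcases le_or_gt 0 (k j) with h | h
      · rw [abs_of_nonneg h,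
          abs_of_nonneg (Real.sin_nonneg_of_nonneg_of_le_pi (by positivity) (by linarith))]
      · rw [abs_of_neg h, abs_of_nonpos
          (Real.sin_nonpos_of_nonpos_of_neg_pi_le (by linarith) (by linarith))]
        rw [neg_div, Real.sin_neg]
    have h2 := Real.mul_le_sin (x := |k j| / 2) (by positivity) (by linarith)
    have h4 : |k j| / Real.pi ≤ |Real.sin (k j / 2)| := by
      calc |k j| / Real.pi = 2 / Real.pi * (|k j| / 2) := by ring
        _ ≤ Real.sin (|k j| / 2) := h2
        _ = |Real.sin (k j / 2)| := h3
    have h5 : |k j| ≤ |Real.sin (k j / 2)| * Real.pi := (div_le_iff₀ hπ).mp h4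
    rw [← sq_abs (k j), ← sq_abs (Real.sin (k j / 2))]
    nlinarith [abs_nonneg (k j), abs_nonneg (Real.sin (k j / 2))]
  have hfac : ∀ (j : Fin d) (n : ℤ),
      (2 * Real.sin ((k j + 2 * Real.pi * n) / 2) / (k j + 2 * Real.pi * n)) ^ 2
      = 4 * Real.sin (k j / 2) ^ 2 / (k j + 2 * Real.pi * n) ^ 2 := by
    intro j n
    have harg : (k j + 2 * Real.pi * n) / 2 = k j / 2 + (n : ℝ) * Real.pi := by ring
    have h1 : ((-1 : ℝ) ^ n) ^ 2 = 1 := by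
      rcases Int.even_or_odd n with he | ho
      · rw [he.neg_one_zpow]; norm_num
      · rw [ho.neg_one_zpow]; norm_num
    have hsin : Real.sin ((k j + 2 * Real.pi * n) / 2) ^ 2 = Real.sin (k j / 2) ^ 2 := by
      rw [harg, Real.sin_add_int_mul_pi, mul_pow, h1, one_mul]
    rw [div_pow, mul_pow, hsin]
    norm_num
  have hA : 1 / dSym d k = 1 / (4 * S) := by rw [dSym, ← hSdef]
  have hApos : (0:ℝ) < 1 / (4 * S) := by positivity
  obtain ⟨T, hTdef⟩ : ∃ T : (Fin d → ℤ) → ℝ, T = fun ℓ =>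
    (1 / dSym d k) *
      ((∑ j, (k j + 2 * Real.pi * ℓ j) ^ 2) / (1 + ∑ j, (k j + 2 * Real.pi * ℓ j) ^ 2)) *
      ∏ j, (2 * Real.sin ((k j + 2 * Real.pi * ℓ j) / 2) / (k j + 2 * Real.pi * ℓ j)) ^ 2 := ⟨_, rfl⟩
  rw [← hTdef]
  have key : ∀ ℓ : Fin d → ℤ,
      T ℓ ≤ (if ℓ = 0 then Real.pi ^ 2 / 4 else 0) + ∑ j₀, ∏ j, hfun j₀ j (ℓ j) := by
    intro ℓ
    have hQ0 : (0:ℝ) ≤ ∑ j, (k j + 2 * Real.pi * ℓ j) ^ 2 :=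
      Finset.sum_nonneg fun j _ => sq_nonneg _
    have hsumnn : (0:ℝ) ≤ ∑ j₀, ∏ j, hfun j₀ j (ℓ j) :=
      Finset.sum_nonneg fun j₀ _ => Finset.prod_nonneg fun j _ => hfun_nonneg _ _ _
    have hTrw : T ℓ = (1 / (4 * S)) *
        ((∑ j, (k j + 2 * Real.pi * ℓ j) ^ 2) / (1 + ∑ j, (k j + 2 * Real.pi * ℓ j) ^ 2)) *
        ∏ j, (4 * Real.sin (k j / 2) ^ 2 / (k j + 2 * Real.pi * ℓ j) ^ 2) := by
      rw [hTdef]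
      simp only [hA, hfac]
    by_cases hℓ : ℓ = 0
    · subst hℓ
      rw [if_pos rfl]
      obtain ⟨Q, hQdef⟩ : ∃ Q : ℝ, Q = ∑ j, (k j) ^ 2 := ⟨_, rfl⟩
      have hT0 : T 0 = (1 / (4 * S)) * (Q / (1 + Q)) *
          ∏ j, (4 * Real.sin (k j / 2) ^ 2 / (k j) ^ 2) := by
        rw [hTrw, hQdef]
        simp
      have hQ0' : (0:ℝ) ≤ Q := by
        rw [hQdef]; exact Finset.sum_nonneg fun j _ => sq_nonneg _
      have hRQ : Q / (1 + Q) ≤ Q := div_le_self hQ0' (by linarith)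
      have hQS : Q ≤ Real.pi ^ 2 * S := by
        rw [hQdef, hSdef, Finset.mul_sum]
        exact Finset.sum_le_sum fun j _ => hks j
      have hP1 : (∏ j, (4 * Real.sin (k j / 2) ^ 2 / (k j) ^ 2)) ≤ 1 := by
        apply Finset.prod_le_one
        · intro j _; positivity
        · intro j _
          have hkj : (0:ℝ) < (k j) ^ 2 := by
            have := (hk j).2; positivity
          rw [div_le_one hkj]
          exact h4s j
      have hPnn : (0:ℝ) ≤ ∏ j, (4 * Real.sin (k j / 2) ^ 2 / (k j) ^ 2) :=
        Finset.prod_nonneg fun j _ => by positivity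
      have hRnn : (0:ℝ) ≤ Q / (1 + Q) := by positivity
      calc T 0 = (1 / (4 * S)) * (Q / (1 + Q)) *
            ∏ j, (4 * Real.sin (k j / 2) ^ 2 / (k j) ^ 2) := hT0
        _ ≤ (1 / (4 * S)) * Q * 1 := by
            apply mul_le_mul _ hP1 hPnn (by positivity)
            exact mul_le_mul_of_nonneg_left hRQ hApos.le
        _ ≤ (1 / (4 * S)) * (Real.pi ^ 2 * S) * 1 := by
            rw [mul_one, mul_one]
            exact mul_le_mul_of_nonneg_left hQS hApos.le
        _ = Real.pi ^ 2 / 4 := by field_simp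
        _ ≤ Real.pi ^ 2 / 4 + ∑ j₀, ∏ j, hfun j₀ j ((0 : Fin d → ℤ) j) :=
            le_add_of_nonneg_right hsumnn
    · rw [if_neg hℓ, zero_add]
      obtain ⟨j₀, hj₀⟩ := Function.ne_iff.mp hℓ
      have hj₀' : ℓ j₀ ≠ 0 := by simpa using hj₀
      have hdge : ∀ j, (ℓ j ≠ 0) →
          Real.pi ^ 2 * ((ℓ j : ℝ)) ^ 2 ≤ (k j + 2 * Real.pi * ℓ j) ^ 2 :=
        fun j hj => denom_ge (hk j).1 hj
      have hπn0 : (0:ℝ) < Real.pi ^ 2 * ((ℓ j₀ : ℝ)) ^ 2 := by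
        have : ((ℓ j₀ : ℝ)) ≠ 0 := Int.cast_ne_zero.mpr hj₀'
        positivity
      have hDpos : (0:ℝ) < (k j₀ + 2 * Real.pi * ℓ j₀) ^ 2 := by
        linarith [hdge j₀ hj₀']
      have hv_nn : ∀ j, (0:ℝ) ≤ 4 * Real.sin (k j / 2) ^ 2 / (k j + 2 * Real.pi * ℓ j) ^ 2 :=
        fun j => by positivity
      have hR1 : (∑ j, (k j + 2 * Real.pi * ℓ j) ^ 2) / (1 + ∑ j, (k j + 2 * Real.pi * ℓ j) ^ 2) ≤ 1 := by
        rw [div_le_one (by linarith)]; linarith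
      have hPnn : (0:ℝ) ≤ ∏ j, (4 * Real.sin (k j / 2) ^ 2 / (k j + 2 * Real.pi * ℓ j) ^ 2) :=
        Finset.prod_nonneg fun j _ => hv_nn j
      have hscalar : (1 / (4 * S)) * (4 * Real.sin (k j₀ / 2) ^ 2 / (k j₀ + 2 * Real.pi * ℓ j₀) ^ 2)
          ≤ hfun j₀ j₀ (ℓ j₀) := by
        rw [hfun_diag]
        have heq : (1 / (4 * S)) * (4 * Real.sin (k j₀ / 2) ^ 2 / (k j₀ + 2 * Real.pi * ℓ j₀) ^ 2)
            = Real.sin (k j₀ / 2) ^ 2 / (S * (k j₀ + 2 * Real.pi * ℓ j₀) ^ 2) := by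
          have hDne : (k j₀ + 2 * Real.pi * (ℓ j₀ : ℝ)) ^ 2 ≠ 0 := ne_of_gt hDpos
          field_simp
        rw [heq, inv_eq_one_div, div_le_div_iff₀ (by positivity) hπn0]
        have := mul_le_mul (hs2S j₀) (hdge j₀ hj₀') hπn0.le hSpos.le
        nlinarith
      have herase : ∏ j ∈ Finset.univ.erase j₀, (4 * Real.sin (k j / 2) ^ 2 / (k j + 2 * Real.pi * ℓ j) ^ 2)
          ≤ ∏ j ∈ Finset.univ.erase j₀, hfun j₀ j (ℓ j) := by
        apply Finset.prod_le_prod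
        · intro j _; exact hv_nn j
        · intro j hj
          have hjne : j ≠ j₀ := (Finset.mem_erase.mp hj).1
          rw [hfun_off hjne]
          by_cases hn : ℓ j = 0
          · rw [if_pos hn, hn]
            have hkj : (0:ℝ) < (k j) ^ 2 := by
              have := (hk j).2; positivity
            simp only [Int.cast_zero, mul_zero, add_zero]
            rw [div_le_one hkj]
            exact h4s j
          · rw [if_neg hn]
            have hπn : (0:ℝ) < Real.pi ^ 2 * ((ℓ j : ℝ)) ^ 2 := by
              have : ((ℓ j : ℝ)) ≠ 0 := Int.cast_ne_zero.mpr hn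
              positivity
            rw [show (4:ℝ) * (Real.pi ^ 2 * ((ℓ j : ℝ)) ^ 2)⁻¹
                = 4 / (Real.pi ^ 2 * ((ℓ j : ℝ)) ^ 2) from (div_eq_mul_inv _ _).symm]
            apply div_le_div₀ (by norm_num) _ hπn (hdge j hn)
            nlinarith [Real.sin_sq_le_one (k j / 2)]
      have claim : T ℓ ≤ ∏ j, hfun j₀ j (ℓ j) := by
        calc T ℓ = (1 / (4 * S)) *
              ((∑ j, (k j + 2 * Real.pi * ℓ j) ^ 2) / (1 + ∑ j, (k j + 2 * Real.pi * ℓ j) ^ 2)) *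
              ∏ j, (4 * Real.sin (k j / 2) ^ 2 / (k j + 2 * Real.pi * ℓ j) ^ 2) := hTrw
          _ ≤ (1 / (4 * S)) * 1 *
              ∏ j, (4 * Real.sin (k j / 2) ^ 2 / (k j + 2 * Real.pi * ℓ j) ^ 2) := by
              apply mul_le_mul_of_nonneg_right _ hPnn
              exact mul_le_mul_of_nonneg_left hR1 hApos.le
          _ = (1 / (4 * S)) *
              ((4 * Real.sin (k j₀ / 2) ^ 2 / (k j₀ + 2 * Real.pi * ℓ j₀) ^ 2) *
                ∏ j ∈ Finset.univ.erase j₀, (4 * Real.sin (k j / 2) ^ 2 / (k j + 2 * Real.pi * ℓ j) ^ 2)) := by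
              rw [Finset.mul_prod_erase Finset.univ
                (fun j => 4 * Real.sin (k j / 2) ^ 2 / (k j + 2 * Real.pi * ℓ j) ^ 2)
                (Finset.mem_univ j₀), mul_one]
          _ = ((1 / (4 * S)) * (4 * Real.sin (k j₀ / 2) ^ 2 / (k j₀ + 2 * Real.pi * ℓ j₀) ^ 2)) *
              ∏ j ∈ Finset.univ.erase j₀, (4 * Real.sin (k j / 2) ^ 2 / (k j + 2 * Real.pi * ℓ j) ^ 2) :=
              (mul_assoc _ _ _).symm
          _ ≤ hfun j₀ j₀ (ℓ j₀) * ∏ j ∈ Finset.univ.erase j₀, hfun j₀ j (ℓ j) := by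
              apply mul_le_mul hscalar herase
                (Finset.prod_nonneg fun j _ => hv_nn j) (hfun_nonneg _ _ _)
          _ = ∏ j, hfun j₀ j (ℓ j) :=
              Finset.mul_prod_erase Finset.univ (fun j => hfun j₀ j (ℓ j)) (Finset.mem_univ j₀)
      calc T ℓ ≤ ∏ j, hfun j₀ j (ℓ j) := claim
        _ ≤ ∑ j₀', ∏ j, hfun j₀' j (ℓ j) :=
            Finset.single_le_sum (f := fun j₀' => ∏ j, hfun j₀' j (ℓ j))
              (fun i _ => Finset.prod_nonneg fun j _ => hfun_nonneg _ _ _)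
              (Finset.mem_univ j₀)
  apply tsum_le_of_sum_le' hC
  intro s
  calc ∑ ℓ ∈ s, T ℓ
      ≤ ∑ ℓ ∈ s, ((if ℓ = 0 then Real.pi ^ 2 / 4 else 0) + ∑ j₀, ∏ j, hfun j₀ j (ℓ j)) :=
        Finset.sum_le_sum fun ℓ _ => key ℓ
    _ = (∑ ℓ ∈ s, (if ℓ = 0 then Real.pi ^ 2 / 4 else 0))
        + ∑ ℓ ∈ s, ∑ j₀, ∏ j, hfun j₀ j (ℓ j) := Finset.sum_add_distrib
    _ ≤ Real.pi ^ 2 / 4 + d * 3 ^ d := by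
        have hpart1 : (∑ ℓ ∈ s, (if ℓ = 0 then Real.pi ^ 2 / 4 else 0)) ≤ Real.pi ^ 2 / 4 := by
          rw [Finset.sum_ite_eq' s 0 (fun _ => Real.pi ^ 2 / 4)]
          split_ifs
          · exact le_refl _
          · positivity
        have hpart2 : ∑ ℓ ∈ s, ∑ j₀, ∏ j, hfun j₀ j (ℓ j) ≤ d * 3 ^ d := by
          rw [Finset.sum_comm]
          have hinner : ∀ j₀ : Fin d, ∑ ℓ ∈ s, ∏ j, hfun j₀ j (ℓ j) ≤ 3 ^ d := by
            intro j₀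
            set t : Fin d → Finset ℤ := fun j => s.image (fun ℓ => ℓ j) with htdef
            have hsub : s ⊆ Fintype.piFinset t := by
              intro ℓ hℓ
              exact Fintype.mem_piFinset.mpr fun j => Finset.mem_image_of_mem _ hℓ
            calc ∑ ℓ ∈ s, ∏ j, hfun j₀ j (ℓ j)
                ≤ ∑ ℓ ∈ Fintype.piFinset t, ∏ j, hfun j₀ j (ℓ j) :=
                  Finset.sum_le_sum_of_subset_of_nonneg hsub
                    (fun ℓ _ _ => Finset.prod_nonneg fun j _ => hfun_nonneg _ _ _)
              _ = ∏ j, ∑ n ∈ t j, hfun j₀ j n := (Finset.prod_univ_sum t fun j n => hfun j₀ j n).symm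
              _ ≤ ∏ _j : Fin d, (3:ℝ) := by
                  apply Finset.prod_le_prod
                  · intro j _
                    exact Finset.sum_nonneg fun n _ => hfun_nonneg _ _ _
                  · intro j _
                    exact hfun_col_sum_le j₀ j (t j)
              _ = 3 ^ d := by
                  rw [Finset.prod_const, Finset.card_univ, Fintype.card_fin]
          calc ∑ j₀ : Fin d, ∑ ℓ ∈ s, ∏ j, hfun j₀ j (ℓ j)
              ≤ ∑ _j₀ : Fin d, (3:ℝ) ^ d := Finset.sum_le_sum fun j₀ _ => hinner j₀
            _ = d * 3 ^ d := by
                rw [Finset.sum_const, Finset.card_univ, Fintype.card_fin, nsmul_eq_mul]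
        linarith
end
end

section
/- Every vector field u in the L² closure of gradients of local functions of the conductance environment satisfies the cycle condition: for any finite nearest-neighbor cycle (x_0, x_1, ..., x_n = x_0) in Z^d, Σ_{j=0}^{n-1} u(τ_{x_j}κ, x_{j+1} - x_j) = 0 for ν-a.e. κ. Consequently, u extends to a unique shift-covariant function ū : Ω × Z^d → R^d with ū(κ, 0) = 0. -/
open MeasureTheory Real Filter ProbabilityTheory
open scoped ENNReal

noncomputable section

variable {d : ℕ}
/-- Positively oriented edges of `ℤ^d`: a base point together with a direction. -/
abbrev EdgeZ (d : ℕ) := ((Fin d → ℤ) × Fin d)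

/-- Configurations indexed by (positively oriented) edges: gradients or conductances. -/
abbrev Cfg (d : ℕ) := EdgeZ d → ℝ

/-- `sv j n` is `n` times the `j`-th coordinate unit vector of `ℤ^d`. -/
def sv (j : Fin d) (n : ℤ) : Fin d → ℤ := fun i => if i = j then n else 0

/-- Shift of a configuration by a lattice vector `x`. -/
def shf (x : Fin d → ℤ) (κ : Cfg d) : Cfg d := fun e => κ (e.1 + x, e.2)

/-- Translation invariance of a measure on configurations. -/
def TInv (ν : Measure (Cfg d)) : Prop := ∀ x, ν.map (shf x) = ν

/-- Ergodicity with respect to the group of lattice shifts. -/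
def Erg (ν : Measure (Cfg d)) : Prop :=
  ∀ A : Set (Cfg d), MeasurableSet A → (∀ x, shf x ⁻¹' A = A) → ν A = 0 ∨ ν A = 1

/-- Uniform ellipticity: `ε ≤ κ_b ≤ 1/ε` almost surely. -/
def Elliptic (ν : Measure (Cfg d)) : Prop :=
  ∃ ε : ℝ, 0 < ε ∧ ∀ᵐ κ ∂ν, ∀ e, ε ≤ κ e ∧ κ e ≤ 1 / ε
/-- A local function of the environment: depends on finitely many edges. -/
def IsLocal (h : Cfg d → ℝ) : Prop :=
  ∃ S : Finset (EdgeZ d), ∀ κ κ' : Cfg d, (∀ e ∈ S, κ e = κ' e) → h κ = h κ'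

/-- The gradient `(∇h)_j = h ∘ τ_{ê_j} - h` of a function of the environment. -/
def grad (h : Cfg d → ℝ) : Cfg d → Fin d → ℝ :=
  fun κ j => h (shf (sv j 1) κ) - h κ

/-- The `L²_vec(ν)` inner product `(u,v) = E_ν[Σ_b κ_b u(κ,b) v(κ,b)]`. -/
def ivec (ν : Measure (Cfg d)) (u v : Cfg d → Fin d → ℝ) : ℝ :=
  ∫ κ, ∑ j, κ (0, j) * u κ j * v κ j ∂ν

/-- Square integrability with respect to `ν`. -/
def SqInt (ν : Measure (Cfg d)) (h : Cfg d → ℝ) : Prop :=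
  ∫⁻ κ, ENNReal.ofReal ((h κ) ^ 2) ∂ν < ⊤

/-- Membership in `L²_vec(ν)`: measurable components, each square integrable. -/
def MemL2vec (ν : Measure (Cfg d)) (u : Cfg d → Fin d → ℝ) : Prop :=
  (∀ j, Measurable fun κ => u κ j) ∧ ∀ j, SqInt ν fun κ => u κ j

/-- Membership in `L²_∇(ν)`, the closure in the `L²_vec(ν)` norm of gradients of
local functions. -/
def MemGradClos (ν : Measure (Cfg d)) (u : Cfg d → Fin d → ℝ) : Prop :=
  ∀ δ : ℝ, 0 < δ → ∃ h : Cfg d → ℝ, IsLocal h ∧ Measurable h ∧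
    ∫⁻ κ, ENNReal.ofReal (∑ j, κ (0, j) * (u κ j - grad h κ j) ^ 2) ∂ν
      < ENNReal.ofReal δ

/-- The extension of a vector field to negative directions: `u(κ,-b) = -u(τ_{-b}κ, b)`.
A signed step is a pair `(j, s)` with `s = true` for `+ê_j`, `false` for `-ê_j`. -/
def uExt (u : Cfg d → Fin d → ℝ) (κ : Cfg d) (s : Fin d × Bool) : ℝ :=
  if s.2 then u κ s.1 else -u (shf (-sv s.1 1) κ) s.1

/-- The lattice displacement of a signed step. -/
def stepOf (s : Fin d × Bool) : Fin d → ℤ :=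
  if s.2 then sv s.1 1 else -sv s.1 1

/-- The sum of a vector field along a nearest-neighbor path started at the origin,
written in environment coordinates. -/
def pathSum (u : Cfg d → Fin d → ℝ) : Cfg d → List (Fin d × Bool) → ℝ
  | _, [] => 0
  | κ, s :: r => uExt u κ s + pathSum u (shf (stepOf s) κ) r

/-- The cycle condition: the sum of the field along every closed nearest-neighbor
loop vanishes. -/
def CycleCond (u : Cfg d → Fin d → ℝ) (κ : Cfg d) : Prop :=
  ∀ ℓ : List (Fin d × Bool), (ℓ.map stepOf).sum = 0 → pathSum u κ ℓ = 0

/-- The divergence `(Lu)(κ) = Σ_b [κ_b u(κ,b) - (τ_{-b}κ)_b u(τ_{-b}κ,b)]`. -/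
def divg (u : Cfg d → Fin d → ℝ) (κ : Cfg d) : ℝ :=
  ∑ j, (κ (0, j) * u κ j
    - shf (-sv j 1) κ (0, j) * u (shf (-sv j 1) κ) j)

/-- A local `ℝ^d`-valued function of the environment. -/
def IsLocalV (h : Cfg d → (Fin d → ℝ)) : Prop :=
  ∃ S : Finset (EdgeZ d), ∀ κ κ' : Cfg d, (∀ e ∈ S, κ e = κ' e) → h κ = h κ'

/-- Gradient of an `ℝ^d`-valued function of the environment. -/
def gradV (h : Cfg d → (Fin d → ℝ)) : Cfg d → Fin d → (Fin d → ℝ) :=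
  fun κ j => h (shf (sv j 1) κ) - h κ

/-- Membership in the closure `L²_∇(ν)` of gradients of local functions, for
`ℝ^d`-valued vector fields. -/
def MemGradClosV (ν : Measure (Cfg d)) (u : Cfg d → Fin d → (Fin d → ℝ)) : Prop :=
  ∀ δ : ℝ, 0 < δ → ∃ h : Cfg d → (Fin d → ℝ), IsLocalV h ∧ Measurable h ∧
    ∫⁻ κ, ENNReal.ofReal (∑ j, κ (0, j) * (∑ k, (u κ j k - gradV h κ j k) ^ 2)) ∂ν
      < ENNReal.ofReal δ
/-! ### Auxiliary lemmas -/

lemma shf_shf (a b : Fin d → ℤ) (κ : Cfg d) : shf a (shf b κ) = shf (a + b) κ := by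
  funext e; simp [shf, add_assoc]

lemma shf_zero (κ : Cfg d) : shf 0 κ = κ := by funext e; simp [shf]

lemma measurable_shf (x : Fin d → ℤ) : Measurable (shf (d := d) x) := by
  apply measurable_pi_lambda
  intro e; exact measurable_pi_apply _

lemma uExt_neg (v : Cfg d → Fin d → ℝ) (κ : Cfg d) (s : Fin d × Bool) :
    uExt v (shf (stepOf s) κ) (s.1, !s.2) = - uExt v κ s := by
  obtain ⟨j, b⟩ := s
  cases b <;> simp [uExt, stepOf, shf_shf, shf_zero]

lemma stepOf_neg (s : Fin d × Bool) : stepOf (d := d) (s.1, !s.2) = - stepOf s := by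
  obtain ⟨j, b⟩ := s; cases b <;> simp [stepOf]

lemma pathSum_append (v : Cfg d → Fin d → ℝ) (κ : Cfg d) (a b : List (Fin d × Bool)) :
    pathSum v κ (a ++ b) = pathSum v κ a + pathSum v (shf (a.map stepOf).sum κ) b := by
  induction a generalizing κ with
  | nil => simp [pathSum, shf_zero]
  | cons s r ih =>
      simp only [List.cons_append, pathSum, List.map_cons, List.sum_cons, List.append_eq, ih, shf_shf]
      ring_nf

lemma pathSum_sub (a b : Cfg d → Fin d → ℝ) (κ : Cfg d) (ℓ : List (Fin d × Bool)) :
    pathSum (fun κ' j => a κ' j - b κ' j) κ ℓ = pathSum a κ ℓ - pathSum b κ ℓ := by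
  induction ℓ generalizing κ with
  | nil => simp [pathSum]
  | cons s r ih =>
      obtain ⟨j, bb⟩ := s
      cases bb <;> simp [pathSum, ih, uExt] <;> ring

lemma pathSum_grad (h : Cfg d → ℝ) (κ : Cfg d) (ℓ : List (Fin d × Bool)) :
    pathSum (grad h) κ ℓ = h (shf (ℓ.map stepOf).sum κ) - h κ := by
  induction ℓ generalizing κ with
  | nil => simp [pathSum, shf_zero]
  | cons s r ih =>
      have huE : uExt (grad h) κ s = h (shf (stepOf s) κ) - h κ := by
        obtain ⟨j, b⟩ := s
        cases b <;> simp [uExt, grad, stepOf, shf_shf, shf_zero]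
      simp only [pathSum, huE, ih, List.map_cons, List.sum_cons, shf_shf]
      rw [add_comm (stepOf s) ((r.map stepOf).sum)]
      ring

def revPath (ℓ : List (Fin d × Bool)) : List (Fin d × Bool) :=
  (ℓ.map (fun s => (s.1, !s.2))).reverse

lemma revPath_sum (ℓ : List (Fin d × Bool)) :
    ((revPath ℓ).map stepOf).sum = -(ℓ.map stepOf).sum := by
  induction ℓ with
  | nil => simp [revPath]
  | cons s r ih =>
      rw [show revPath (s :: r) = revPath r ++ [(s.1, Bool.not s.2)] from by simp [revPath]]
      rw [List.map_append, List.sum_append, ih]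
      simp only [List.map_cons, List.sum_cons, List.map_nil, List.sum_nil, stepOf_neg]
      abel

lemma pathSum_revPath (v : Cfg d → Fin d → ℝ) (κ : Cfg d) (ℓ : List (Fin d × Bool)) :
    pathSum v (shf (ℓ.map stepOf).sum κ) (revPath ℓ) = - pathSum v κ ℓ := by
  induction ℓ generalizing κ with
  | nil => simp [revPath, pathSum]
  | cons s r ih =>
      have : revPath (s :: r) = revPath r ++ [(s.1, Bool.not s.2)] := by simp [revPath]
      rw [this, pathSum_append]
      have hsum : ((s :: r).map stepOf).sum = stepOf s + (r.map stepOf).sum := by simp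
      rw [hsum]
      have h1 : shf (stepOf s + (r.map stepOf).sum) κ = shf ((r.map stepOf).sum) (shf (stepOf s) κ) := by
        rw [shf_shf, add_comm]
      rw [h1, ih (shf (stepOf s) κ), revPath_sum]
      have h2 : shf (-(List.map stepOf r).sum) (shf ((List.map stepOf r).sum) (shf (stepOf s) κ))
          = shf (stepOf s) κ := by rw [shf_shf, neg_add_cancel, shf_zero]
      rw [h2]
      have h3 : pathSum v (shf (stepOf s) κ) ([(s.1, Bool.not s.2)] : List (Fin d × Bool)) = - uExt v κ s := by
        simp [pathSum, uExt_neg]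
      rw [h3]
      simp [pathSum]

lemma pathIndep {v : Cfg d → Fin d → ℝ} {κ : Cfg d} (hc : CycleCond v κ)
    {ℓ₁ ℓ₂ : List (Fin d × Bool)} (hs : (ℓ₁.map stepOf).sum = (ℓ₂.map stepOf).sum) :
    pathSum v κ ℓ₁ = pathSum v κ ℓ₂ := by
  have hloop : (((ℓ₁ ++ revPath ℓ₂).map stepOf)).sum = 0 := by
    simp [List.map_append, revPath_sum, hs]
  have := hc _ hloop
  rw [pathSum_append] at this
  rw [hs] at this
  rw [pathSum_revPath] at this
  linarith
lemma measurable_uExt {v : Cfg d → Fin d → ℝ} (hv : ∀ j, Measurable fun κ => v κ j)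
    (s : Fin d × Bool) : Measurable fun κ => uExt v κ s := by
  obtain ⟨j, b⟩ := s
  cases b
  · exact ((hv j).comp (measurable_shf (-sv j 1))).neg
  · simpa [uExt] using hv j

lemma measurable_pathSum {v : Cfg d → Fin d → ℝ} (hv : ∀ j, Measurable fun κ => v κ j)
    (ℓ : List (Fin d × Bool)) : Measurable fun κ => pathSum v κ ℓ := by
  induction ℓ with
  | nil => simpa [pathSum] using measurable_const
  | cons s r ih =>
      have : (fun κ => pathSum v κ (s :: r))
          = fun κ => uExt v κ s + pathSum v (shf (stepOf s) κ) r := rfl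
      rw [this]
      exact (measurable_uExt hv s).add (ih.comp (measurable_shf _))

lemma lintegral_shf {ν : Measure (Cfg d)} (hTI : TInv ν) {f : Cfg d → ℝ≥0∞}
    (hf : Measurable f) (x : Fin d → ℤ) :
    ∫⁻ κ, f (shf x κ) ∂ν = ∫⁻ κ, f κ ∂ν := by
  conv_rhs => rw [← hTI x]
  rw [lintegral_map hf (measurable_shf x)]

lemma lintegral_uExt_le {ν : Measure (Cfg d)} (hTI : TInv ν)
    {v : Cfg d → Fin d → ℝ} (hv : ∀ j, Measurable fun κ => v κ j)
    {C : ℝ≥0∞} (hC : ∀ j, ∫⁻ κ, ENNReal.ofReal |v κ j| ∂ν ≤ C)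
    (s : Fin d × Bool) : ∫⁻ κ, ENNReal.ofReal |uExt v κ s| ∂ν ≤ C := by
  obtain ⟨j, b⟩ := s
  cases b
  · have heq : ∀ κ : Cfg d, ENNReal.ofReal |uExt v κ (j, false)|
        = ENNReal.ofReal |v (shf (-sv j 1) κ) j| := fun κ => by simp [uExt, abs_neg]
    calc ∫⁻ κ, ENNReal.ofReal |uExt v κ (j, false)| ∂ν
        = ∫⁻ κ, ENNReal.ofReal |v (shf (-sv j 1) κ) j| ∂ν := lintegral_congr heq
      _ = ∫⁻ κ, ENNReal.ofReal |v κ j| ∂ν :=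
          lintegral_shf hTI ((hv j).abs.ennreal_ofReal) _
      _ ≤ C := hC j
  · have heq : ∀ κ : Cfg d, ENNReal.ofReal |uExt v κ (j, true)|
        = ENNReal.ofReal |v κ j| := fun κ => by simp [uExt]
    rw [lintegral_congr heq]; exact hC j

lemma lintegral_pathSum_le {ν : Measure (Cfg d)} (hTI : TInv ν)
    {v : Cfg d → Fin d → ℝ} (hv : ∀ j, Measurable fun κ => v κ j)
    {C : ℝ≥0∞} (hC : ∀ j, ∫⁻ κ, ENNReal.ofReal |v κ j| ∂ν ≤ C)
    (ℓ : List (Fin d × Bool)) :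
    ∫⁻ κ, ENNReal.ofReal |pathSum v κ ℓ| ∂ν ≤ ℓ.length * C := by
  induction ℓ with
  | nil =>
      have h0 : ∀ κ : Cfg d, ENNReal.ofReal |pathSum v κ ([] : List (Fin d × Bool))| = 0 := fun κ => by
        simp [pathSum]
      rw [lintegral_congr h0, lintegral_zero]
      exact zero_le
  | cons s r ih =>
      calc ∫⁻ κ, ENNReal.ofReal |pathSum v κ (s :: r)| ∂ν
          ≤ ∫⁻ κ, (ENNReal.ofReal |uExt v κ s|
              + ENNReal.ofReal |pathSum v (shf (stepOf s) κ) r|) ∂ν := by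
            apply lintegral_mono
            intro κ
            calc ENNReal.ofReal |pathSum v κ (s :: r)|
                ≤ ENNReal.ofReal (|uExt v κ s| + |pathSum v (shf (stepOf s) κ) r|) :=
                  ENNReal.ofReal_le_ofReal (abs_add_le _ _)
              _ ≤ _ := ENNReal.ofReal_add_le
        _ = (∫⁻ κ, ENNReal.ofReal |uExt v κ s| ∂ν)
            + ∫⁻ κ, ENNReal.ofReal |pathSum v (shf (stepOf s) κ) r| ∂ν :=
            lintegral_add_left ((measurable_uExt hv s).abs.ennreal_ofReal) _
        _ ≤ C + r.length * C := by
            apply add_le_add (lintegral_uExt_le hTI hv hC s)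
            have : ∫⁻ κ, ENNReal.ofReal |pathSum v (shf (stepOf s) κ) r| ∂ν
                = ∫⁻ κ, ENNReal.ofReal |pathSum v κ r| ∂ν :=
              lintegral_shf hTI ((measurable_pathSum hv r).abs.ennreal_ofReal) _
            rw [this]; exact ih
        _ = (s :: r).length * C := by
            rw [List.length_cons]; push_cast; ring
set_option maxHeartbeats 1000000 in
lemma key_zero {ν : Measure (Cfg d)} [IsProbabilityMeasure ν]
    (hTI : TInv ν) (hEll : Elliptic ν)
    {u : Cfg d → Fin d → (Fin d → ℝ)} (hum : ∀ j, Measurable fun κ => u κ j)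
    (hu : MemGradClosV ν u) (k : Fin d) (ℓ : List (Fin d × Bool))
    (hℓ : (ℓ.map stepOf).sum = 0) :
    ∀ᵐ κ ∂ν, pathSum (fun κ' j => u κ' j k) κ ℓ = 0 := by
  obtain ⟨ε, hε, hae⟩ := hEll
  have humk : ∀ j, Measurable fun κ => u κ j k :=
    fun j => (measurable_pi_apply k).comp (hum j)
  set F := fun κ => pathSum (fun κ' j => u κ' j k) κ ℓ with hF
  have hFm : Measurable F := measurable_pathSum humk ℓ
  have hT : ∫⁻ κ, ENNReal.ofReal |F κ| ∂ν = 0 := by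
    refine le_antisymm (ENNReal.le_of_forall_pos_le_add fun η hη _ => ?_) zero_le
    rw [zero_add]
    set L : ℝ := (ℓ.length : ℝ) with hLdef
    have hL0 : (0:ℝ) ≤ L := Nat.cast_nonneg _
    have hη' : (0:ℝ) < (η : ℝ) := hη
    set a : ℝ := (η : ℝ) / (2 * (L + 1)) with ha
    have ha0 : 0 < a := by positivity
    obtain ⟨h, hloc, hhm, hint⟩ := hu (4 * a ^ 2 * ε) (by positivity)
    set v : Cfg d → Fin d → ℝ := fun κ j => u κ j k - grad (fun κ' => h κ' k) κ j with hv
    have hvm : ∀ j, Measurable fun κ => v κ j := fun j =>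
      (humk j).sub ((((measurable_pi_apply k).comp hhm).comp (measurable_shf _)).sub
        ((measurable_pi_apply k).comp hhm))
    have hFv : ∀ κ, F κ = pathSum v κ ℓ := by
      intro κ
      rw [hF, hv]
      rw [show (fun κ' j => u κ' j k - grad (fun κ'' => h κ'' k) κ' j)
            = fun κ' j => (fun κ'' j' => u κ'' j' k) κ' j - grad (fun κ'' => h κ'' k) κ' j
          from rfl]
      rw [pathSum_sub, pathSum_grad, hℓ, shf_zero, sub_self, sub_zero]
    set S : Cfg d → ℝ :=
      fun κ => ∑ j, κ (0, j) * (∑ k', (u κ j k' - gradV h κ j k') ^ 2) with hS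
    have hSm : Measurable S := by
      apply Finset.measurable_sum
      intro j _
      apply Measurable.mul (measurable_pi_apply _)
      apply Finset.measurable_sum
      intro k' _
      exact (((measurable_pi_apply k').comp (hum j)).sub
        ((((measurable_pi_apply k').comp hhm).comp (measurable_shf _)).sub
          ((measurable_pi_apply k').comp hhm))).pow_const 2
    have hint' : ∫⁻ κ, ENNReal.ofReal (S κ) ∂ν ≤ ENNReal.ofReal (4 * a ^ 2 * ε) :=
      le_of_lt hint
    have hCv : ∀ j, ∫⁻ κ, ENNReal.ofReal |v κ j| ∂ν ≤ ENNReal.ofReal (2 * a) := by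
      intro j
      have hpt : ∀ᵐ κ ∂ν, ENNReal.ofReal |v κ j|
          ≤ ENNReal.ofReal a + ENNReal.ofReal (1/(4*a*ε)) * ENNReal.ofReal (S κ) := by
        filter_upwards [hae] with κ hκ
        have h2 : (v κ j) ^ 2 ≤ ∑ k', (u κ j k' - gradV h κ j k') ^ 2 := by
          have hvk : v κ j = u κ j k - gradV h κ j k := rfl
          rw [hvk]
          exact Finset.single_le_sum (f := fun k' => (u κ j k' - gradV h κ j k') ^ 2)
            (fun k' _ => sq_nonneg _) (Finset.mem_univ k)
        have h1 : ε * (v κ j) ^ 2 ≤ S κ := by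
          calc ε * (v κ j) ^ 2
              ≤ κ (0, j) * (∑ k', (u κ j k' - gradV h κ j k') ^ 2) :=
                mul_le_mul (hκ (0, j)).1 h2 (sq_nonneg _)
                  (le_trans hε.le (hκ (0, j)).1)
            _ ≤ S κ :=
                Finset.single_le_sum
                  (f := fun j' => κ (0, j') * (∑ k', (u κ j' k' - gradV h κ j' k') ^ 2))
                  (fun j' _ => mul_nonneg (le_trans hε.le (hκ (0, j')).1)
                    (Finset.sum_nonneg fun _ _ => sq_nonneg _)) (Finset.mem_univ j)
        have key : 4*a*ε*|v κ j| ≤ 4*a^2*ε + S κ := by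
          nlinarith [mul_nonneg hε.le (sq_nonneg (|v κ j| - 2*a)), sq_abs (v κ j),
            abs_nonneg (v κ j)]
        have habs : |v κ j| ≤ a + 1/(4*a*ε) * S κ := by
          have h4 : (0:ℝ) < 4*a*ε := by positivity
          rw [← mul_le_mul_iff_right₀ h4]
          calc 4*a*ε*|v κ j| ≤ 4*a^2*ε + S κ := key
            _ = 4*a*ε * (a + 1/(4*a*ε) * S κ) := by field_simp
        calc ENNReal.ofReal |v κ j|
            ≤ ENNReal.ofReal (a + 1/(4*a*ε) * S κ) := ENNReal.ofReal_le_ofReal habs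
          _ ≤ ENNReal.ofReal a + ENNReal.ofReal (1/(4*a*ε) * S κ) := ENNReal.ofReal_add_le
          _ = ENNReal.ofReal a + ENNReal.ofReal (1/(4*a*ε)) * ENNReal.ofReal (S κ) := by
              rw [ENNReal.ofReal_mul (by positivity)]
      calc ∫⁻ κ, ENNReal.ofReal |v κ j| ∂ν
          ≤ ∫⁻ κ, (ENNReal.ofReal a
              + ENNReal.ofReal (1/(4*a*ε)) * ENNReal.ofReal (S κ)) ∂ν :=
            lintegral_mono_ae hpt
        _ = ENNReal.ofReal a
            + ENNReal.ofReal (1/(4*a*ε)) * ∫⁻ κ, ENNReal.ofReal (S κ) ∂ν := by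
            rw [lintegral_add_left measurable_const,
              lintegral_const_mul _ hSm.ennreal_ofReal, lintegral_const, measure_univ,
              mul_one]
        _ ≤ ENNReal.ofReal a
            + ENNReal.ofReal (1/(4*a*ε)) * ENNReal.ofReal (4*a^2*ε) := by gcongr
        _ = ENNReal.ofReal (2 * a) := by
            rw [← ENNReal.ofReal_mul (by positivity),
              ← ENNReal.ofReal_add ha0.le (by positivity)]
            congr 1
            field_simp
            ring
    calc ∫⁻ κ, ENNReal.ofReal |F κ| ∂ν
        = ∫⁻ κ, ENNReal.ofReal |pathSum v κ ℓ| ∂ν :=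
          lintegral_congr (fun κ => by rw [hFv])
      _ ≤ (ℓ.length : ℝ≥0∞) * ENNReal.ofReal (2 * a) := lintegral_pathSum_le hTI hvm hCv ℓ
      _ = ENNReal.ofReal (L * (2 * a)) := by
          rw [ENNReal.ofReal_mul hL0, ENNReal.ofReal_natCast]
      _ ≤ (η : ℝ≥0∞) := by
          rw [← ENNReal.ofReal_coe_nnreal]
          apply ENNReal.ofReal_le_ofReal
          rw [ha]
          have heq : L * (2 * ((η:ℝ) / (2 * (L + 1)))) = (η:ℝ) * L / (L + 1) := by
            field_simp
          rw [heq, div_le_iff₀ (by linarith : (0:ℝ) < L + 1)]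
          nlinarith [hη'.le]
  have h0 := (lintegral_eq_zero_iff hFm.abs.ennreal_ofReal).mp hT
  filter_upwards [h0] with κ hκ
  have : |F κ| ≤ 0 := by
    have := hκ
    simp only [Pi.zero_apply, ENNReal.ofReal_eq_zero] at this
    exact this
  exact abs_eq_zero.mp (le_antisymm this (abs_nonneg _))
/-- Canonical word representing a lattice point. -/
def word (x : Fin d → ℤ) : List (Fin d × Bool) :=
  (List.finRange d).flatMap fun j => List.replicate (x j).natAbs (j, decide (0 ≤ x j))

lemma sum_flatMap_steps (l : List (Fin d)) (f : Fin d → List (Fin d × Bool)) :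
    (((l.flatMap f).map stepOf).sum : Fin d → ℤ)
      = (l.map fun j => ((f j).map stepOf).sum).sum := by
  induction l with
  | nil => simp
  | cons a r ih => simp [List.flatMap_cons, ih]

lemma replicate_steps_sum (j : Fin d) (n : ℤ) :
    (((List.replicate n.natAbs ((j, decide (0 ≤ n)) : Fin d × Bool)).map stepOf).sum
      : Fin d → ℤ) = sv j n := by
  rw [List.map_replicate, List.sum_replicate]
  funext i
  by_cases hn : 0 ≤ n <;> by_cases hij : i = j <;>
    simp [stepOf, sv, hn, hij, Pi.smul_apply] <;>
    rw [abs_of_nonpos (by omega : n ≤ 0)] <;> ring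

lemma word_sum (x : Fin d → ℤ) : (((word x).map stepOf).sum : Fin d → ℤ) = x := by
  rw [word, sum_flatMap_steps]
  have : ∀ j : Fin d,
      (((List.replicate (x j).natAbs ((j, decide (0 ≤ x j)) : Fin d × Bool)).map
        stepOf).sum : Fin d → ℤ) = sv j (x j) := fun j => replicate_steps_sum j (x j)
  rw [List.map_congr_left (fun j _ => this j)]
  rw [← Fin.sum_univ_def]
  funext i
  rw [Finset.sum_apply]
  simp [sv]

lemma word_zero : word (0 : Fin d → ℤ) = [] := by
  simp [word]

/-- Vector-valued path sum. -/
def vps (u : Cfg d → Fin d → (Fin d → ℝ)) (κ : Cfg d) (ℓ : List (Fin d × Bool)) :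
    Fin d → ℝ :=
  fun k => pathSum (fun κ' j => u κ' j k) κ ℓ

/-- The canonical shift-covariant extension of `u`. -/
def ubarOf (u : Cfg d → Fin d → (Fin d → ℝ)) (κ : Cfg d) (x : Fin d → ℤ) : Fin d → ℝ :=
  vps u κ (word x)

lemma stepOf_true (j : Fin d) : stepOf ((j, true) : Fin d × Bool) = sv j 1 := by
  simp [stepOf]

lemma pathSum_single_true (v : Cfg d → Fin d → ℝ) (κ : Cfg d) (j : Fin d) :
    pathSum v κ ([(j, true)] : List (Fin d × Bool)) = v κ j := by
  simp [pathSum, uExt]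

/-- On the good set, the canonical extension has the required properties. -/
lemma ubarOf_props {u : Cfg d → Fin d → (Fin d → ℝ)} {κ : Cfg d}
    (hG : ∀ x k, CycleCond (fun κ' j => u κ' j k) (shf x κ)) :
    (ubarOf u κ 0 = 0 ∧
      ∀ (x : Fin d → ℤ) (j : Fin d),
        ubarOf u κ (x + sv j 1) - ubarOf u κ x = ubarOf u (shf x κ) (sv j 1)) ∧
    ∀ j, ubarOf u κ (sv j 1) = u κ j := by
  have hGκ : ∀ k, CycleCond (fun κ' j => u κ' j k) κ := by
    intro k; have := hG 0 k; rwa [shf_zero] at this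
  have hval : ∀ (x : Fin d → ℤ) (j : Fin d),
      ubarOf u (shf x κ) (sv j 1) = u (shf x κ) j := by
    intro x j
    funext k
    have hpi : pathSum (fun κ' j' => u κ' j' k) (shf x κ) (word (sv j 1))
        = pathSum (fun κ' j' => u κ' j' k) (shf x κ) ([(j, true)] : List (Fin d × Bool)) := by
      apply pathIndep (hG x k)
      rw [word_sum]
      simp [stepOf_true]
    show pathSum (fun κ' j' => u κ' j' k) (shf x κ) (word (sv j 1)) = u (shf x κ) j k
    rw [hpi, pathSum_single_true]
  refine ⟨⟨?_, ?_⟩, ?_⟩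
  · funext k
    show pathSum (fun κ' j' => u κ' j' k) κ (word 0) = 0
    rw [word_zero]
    rfl
  · intro x j
    funext k
    simp only [Pi.sub_apply]
    have h1 : pathSum (fun κ' j' => u κ' j' k) κ (word (x + sv j 1))
        = pathSum (fun κ' j' => u κ' j' k) κ (word x ++ ([(j, true)] : List (Fin d × Bool))) := by
      apply pathIndep (hGκ k)
      rw [word_sum, List.map_append, List.sum_append, word_sum]
      simp [stepOf_true]
    show pathSum (fun κ' j' => u κ' j' k) κ (word (x + sv j 1))
        - pathSum (fun κ' j' => u κ' j' k) κ (word x)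
        = ubarOf u (shf x κ) (sv j 1) k
    rw [h1, pathSum_append, word_sum, pathSum_single_true, hval x j]
    ring
  · intro j
    have := hval 0 j
    rwa [shf_zero] at this

/-- Characterization of any shift-covariant extension by path sums. -/
lemma ubar_char {u : Cfg d → Fin d → (Fin d → ℝ)}
    {ubar' : Cfg d → (Fin d → ℤ) → Fin d → ℝ} {κ : Cfg d}
    (H0 : ubar' κ 0 = 0)
    (Hcov : ∀ (x : Fin d → ℤ) (j : Fin d),
      ubar' κ (x + sv j 1) - ubar' κ x = ubar' (shf x κ) (sv j 1))
    (Hval : ∀ (y : Fin d → ℤ) (j : Fin d), ubar' (shf y κ) (sv j 1) = u (shf y κ) j)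
    (ℓ : List (Fin d × Bool)) :
    ∀ y, ubar' κ (y + (ℓ.map stepOf).sum) = ubar' κ y + vps u (shf y κ) ℓ := by
  induction ℓ with
  | nil =>
      intro y
      have : vps u (shf y κ) ([] : List (Fin d × Bool)) = 0 := by
        funext k; rfl
      simp [this]
  | cons s r ih =>
      intro y
      have hstep : ubar' κ (y + stepOf s) = ubar' κ y + (fun k =>
          uExt (fun κ' j' => u κ' j' k) (shf y κ) s) := by
        obtain ⟨j, b⟩ := s
        cases b
        · -- negative step
          have hc := Hcov (y - sv j 1) j
          rw [sub_add_cancel] at hc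
          have hv := Hval (y - sv j 1) j
          rw [hv] at hc
          have hfn : (fun k => uExt (fun κ' j' => u κ' j' k) (shf y κ) (j, false))
              = - u (shf (y - sv j 1) κ) j := by
            funext k
            simp only [uExt, Bool.false_eq_true, if_false, Pi.neg_apply]
            rw [shf_shf]
            congr 2
            funext i
            simp [sv, sub_eq_add_neg, add_comm]
          rw [hfn]
          have hyy : y + stepOf ((j, false) : Fin d × Bool) = y - sv j 1 := by
            funext i; simp [stepOf, sv, sub_eq_add_neg]
          rw [hyy]
          have : ubar' κ (y - sv j 1) = ubar' κ y - u (shf (y - sv j 1) κ) j := by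
            rw [← hc]; abel
          rw [this]; abel
        · -- positive step
          have hc := Hcov y j
          have hv := Hval y j
          rw [hv] at hc
          have hfn : (fun k => uExt (fun κ' j' => u κ' j' k) (shf y κ) (j, true))
              = u (shf y κ) j := by
            funext k; simp [uExt]
          rw [hfn, stepOf_true, ← hc]
          abel
      have hsum : ((s :: r).map stepOf).sum = stepOf s + (r.map stepOf).sum := by simp
      rw [hsum, ← add_assoc]
      rw [ih (y + stepOf s), hstep]
      have hvv : vps u (shf (y + stepOf s) κ) r = fun k =>
          pathSum (fun κ' j' => u κ' j' k) (shf (stepOf s) (shf y κ)) r := by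
        funext k
        rw [shf_shf, add_comm]
        rfl
      rw [hvv]
      have hvc : vps u (shf y κ) (s :: r) = (fun k =>
          uExt (fun κ' j' => u κ' j' k) (shf y κ) s) + (fun k =>
          pathSum (fun κ' j' => u κ' j' k) (shf (stepOf s) (shf y κ)) r) := by
        funext k; rfl
      rw [hvc]
      abel

/-- Lemma: cycle condition and shift-covariant extension.
Every `ℝ^d`-valued vector field `u ∈ L²_∇(ν)` satisfies, `ν`-a.s., the cycle
condition along all finite nearest-neighbor cycles; consequently `u` extends to a
shift-covariant function `ū : Ω × ℤ^d → ℝ^d` with `ū(κ,0) = 0` agreeing with `u`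
on the coordinate directions, and this extension is unique up to a `ν`-null set. -/
theorem gradientClosure_cycle_and_extension
    (ν : Measure (Cfg d)) [IsProbabilityMeasure ν]
    (hTI : TInv ν) (hEll : Elliptic ν)
    (u : Cfg d → Fin d → (Fin d → ℝ))
    (hum : ∀ j, Measurable fun κ => u κ j)
    (hu : MemGradClosV ν u) :
    (∀ᵐ κ ∂ν, ∀ k : Fin d, CycleCond (fun κ' j => u κ' j k) κ) ∧
    ∃ ubar : Cfg d → (Fin d → ℤ) → (Fin d → ℝ),
      (∀ᵐ κ ∂ν,
        (ubar κ 0 = 0 ∧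
          ∀ (x : Fin d → ℤ) (j : Fin d),
            ubar κ (x + sv j 1) - ubar κ x = ubar (shf x κ) (sv j 1)) ∧
        ∀ j, ubar κ (sv j 1) = u κ j) ∧
      ∀ ubar' : Cfg d → (Fin d → ℤ) → (Fin d → ℝ),
        (∀ᵐ κ ∂ν,
          (ubar' κ 0 = 0 ∧
            ∀ (x : Fin d → ℤ) (j : Fin d),
              ubar' κ (x + sv j 1) - ubar' κ x = ubar' (shf x κ) (sv j 1)) ∧
          ∀ j, ubar' κ (sv j 1) = u κ j) →
        ∀ᵐ κ ∂ν, ∀ x, ubar' κ x = ubar κ x := by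
  classical
  have base : ∀ᵐ κ ∂ν, ∀ k : Fin d, CycleCond (fun κ' j => u κ' j k) κ := by
    rw [ae_all_iff]
    intro k
    unfold CycleCond
    rw [ae_all_iff]
    intro ℓ
    by_cases hℓ : (ℓ.map stepOf).sum = 0
    · filter_upwards [key_zero hTI hEll hum hu k ℓ hℓ] with κ hz
      exact fun _ => hz
    · filter_upwards with κ hc
      exact absurd hc hℓ
  have hGood : ∀ᵐ κ ∂ν, ∀ (x : Fin d → ℤ) (k : Fin d),
      CycleCond (fun κ' j => u κ' j k) (shf x κ) := by
    rw [ae_all_iff]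
    intro x
    have hmap : ∀ᵐ κ ∂(ν.map (shf x)), ∀ k : Fin d,
        CycleCond (fun κ' j => u κ' j k) κ := by
      rw [hTI x]; exact base
    exact ae_of_ae_map (measurable_shf x).aemeasurable hmap
  refine ⟨base, ubarOf u, ?_, ?_⟩
  · filter_upwards [hGood] with κ hκ
    exact ubarOf_props hκ
  · intro ubar' h'
    have h'' : ∀ᵐ κ ∂ν, ∀ y : Fin d → ℤ,
        ((ubar' (shf y κ) 0 = 0 ∧
            ∀ (x : Fin d → ℤ) (j : Fin d),
              ubar' (shf y κ) (x + sv j 1) - ubar' (shf y κ) x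
                = ubar' (shf x (shf y κ)) (sv j 1)) ∧
          ∀ j, ubar' (shf y κ) (sv j 1) = u (shf y κ) j) := by
      rw [ae_all_iff]
      intro y
      have hmap : ∀ᵐ κ ∂(ν.map (shf y)),
          ((ubar' κ 0 = 0 ∧
              ∀ (x : Fin d → ℤ) (j : Fin d),
                ubar' κ (x + sv j 1) - ubar' κ x = ubar' (shf x κ) (sv j 1)) ∧
            ∀ j, ubar' κ (sv j 1) = u κ j) := by
        rw [hTI y]; exact h'
      exact ae_of_ae_map (measurable_shf y).aemeasurable hmap
    filter_upwards [h''] with κ hκ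
    intro x
    have H0 : ubar' κ 0 = 0 := by
      have := (hκ 0).1.1; rwa [shf_zero] at this
    have Hcov : ∀ (x : Fin d → ℤ) (j : Fin d),
        ubar' κ (x + sv j 1) - ubar' κ x = ubar' (shf x κ) (sv j 1) := by
      intro x j
      have := (hκ 0).1.2 x j
      rwa [shf_zero] at this
    have Hval : ∀ (y : Fin d → ℤ) (j : Fin d),
        ubar' (shf y κ) (sv j 1) = u (shf y κ) j := fun y j => (hκ y).2 j
    have hchar := ubar_char (u := u) H0 Hcov Hval (word x) 0
    rw [word_sum, zero_add, H0, shf_zero, zero_add] at hchar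
    exact hchar
end
end

section
/- Uniqueness of harmonic shift-covariant functions: Let ν be translation-invariant, ergodic on elliptic conductance configurations. If g : Ω × Z^d → R is shift-covariant, harmonic in the sense that L_κ g(κ, ·) = 0 ν-a.s., square integrable (E_ν|g(·,x)|² < ∞ for |x|=1), and has E_ν(g(·,x)) = 0 for all |x|=1, then g(·,x) = 0 ν-a.s. for all x ∈ Z^d. -/
open MeasureTheory Real Filter ProbabilityTheory
open scoped ENNReal

noncomputable section

variable {d : ℕ}
/-- The generator `(L_κ f)(x) = Σ_{y: |y-x|=1} κ_{xy} [f(y) - f(x)]` of the random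
walk among the conductances `κ` (with `κ_{xy} = κ_{yx}`). -/
def Lgen (κ : Cfg d) (f : (Fin d → ℤ) → ℝ) (x : Fin d → ℤ) : ℝ :=
  ∑ j, (κ (x, j) * (f (x + sv j 1) - f x)
    + κ (x - sv j 1, j) * (f (x - sv j 1) - f x))

set_option maxHeartbeats 1000000
set_option synthInstance.maxHeartbeats 200000
open scoped RealInnerProductSpace

namespace HSC

lemma measurable_shf (x : Fin d → ℤ) : Measurable (shf (d := d) x) :=
  measurable_pi_lambda _ fun e => measurable_pi_apply _

lemma shf_shf (x y : Fin d → ℤ) (κ : Cfg d) : shf x (shf y κ) = shf (x + y) κ := by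
  funext e; simp [shf, add_assoc]

lemma shf_zero (κ : Cfg d) : shf 0 κ = κ := by funext e; simp [shf]

def shfE (x : Fin d → ℤ) : Cfg d ≃ᵐ Cfg d where
  toFun := shf x
  invFun := shf (-x)
  left_inv := fun κ => by rw [shf_shf, neg_add_cancel, shf_zero]
  right_inv := fun κ => by rw [shf_shf, add_neg_cancel, shf_zero]
  measurable_toFun := measurable_shf x
  measurable_invFun := measurable_shf (-x)

variable (ν : Measure (Cfg d)) [IsProbabilityMeasure ν]

lemma sub_sv_eq_update (x : Fin d → ℤ) (j : Fin d) :
    x - sv j 1 = Function.update x j (x j - 1) := by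
  funext i
  by_cases h : i = j
  · subst h; simp [sv]
  · simp [sv, h, Function.update_of_ne h]

lemma add_sv_eq_update (x : Fin d → ℤ) (j : Fin d) :
    x + sv j 1 = Function.update x j (x j + 1) := by
  funext i
  by_cases h : i = j
  · subst h; simp [sv]
  · simp [sv, h, Function.update_of_ne h]

lemma weight_update (x : Fin d → ℤ) (j : Fin d) (m : ℤ) :
    ∑ i, ((Function.update x j m) i).natAbs
      = m.natAbs + ∑ i ∈ Finset.univ.erase j, (x i).natAbs := by
  rw [← Finset.add_sum_erase _ _ (Finset.mem_univ j)]
  congr 1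
  · simp
  · exact Finset.sum_congr rfl fun i hi => by
      rw [Function.update_of_ne (Finset.ne_of_mem_erase hi)]

lemma zd_induction {P : (Fin d → ℤ) → Prop} (h0 : P 0)
    (hsucc : ∀ x j, P x → P (x + sv j 1)) (hpred : ∀ x j, P x → P (x - sv j 1)) :
    ∀ x, P x := by
  have key : ∀ n : ℕ, ∀ x : Fin d → ℤ, (∑ i, (x i).natAbs) = n → P x := by
    intro n
    induction n with
    | zero =>
      intro x hx
      have hx0 : x = 0 := by
        funext i
        have := Finset.sum_eq_zero_iff.mp hx i (Finset.mem_univ i)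
        simpa [Int.natAbs_eq_zero] using this
      rwa [hx0]
    | succ n ih =>
      intro x hx
      have hne : ∃ j, x j ≠ 0 := by
        by_contra h
        push_neg at h
        simp [h] at hx
      obtain ⟨j, hj⟩ := hne
      rcases hj.lt_or_gt with hneg | hpos
      · -- x j < 0 : x = (x + sv j 1) - sv j 1
        have hw : ∑ i, ((x + sv j 1) i).natAbs = n := by
          rw [add_sv_eq_update, weight_update]
          have hx' : ∑ i, (x i).natAbs
              = (x j).natAbs + ∑ i ∈ Finset.univ.erase j, (x i).natAbs := by
            exact (Finset.add_sum_erase _ _ (Finset.mem_univ j)).symm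
          have h1 : (x j + 1).natAbs + 1 = (x j).natAbs := by omega
          omega
        have := hpred (x + sv j 1) j (ih _ hw)
        simpa using this
      · have hw : ∑ i, ((x - sv j 1) i).natAbs = n := by
          rw [sub_sv_eq_update, weight_update]
          have hx' : ∑ i, (x i).natAbs
              = (x j).natAbs + ∑ i ∈ Finset.univ.erase j, (x i).natAbs := by
            exact (Finset.add_sum_erase _ _ (Finset.mem_univ j)).symm
          have h1 : (x j - 1).natAbs + 1 = (x j).natAbs := by omega
          omega
        have := hsucc (x - sv j 1) j (ih _ hw)
        simpa using this
  exact fun x => key _ x rfl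


lemma mpres (hTI : TInv ν) (x : Fin d → ℤ) : MeasurePreserving (shf x) ν ν :=
  ⟨measurable_shf x, hTI x⟩

lemma ae_shift (hTI : TInv ν) (x : Fin d → ℤ) {p : Cfg d → Prop}
    (hp : ∀ᵐ κ ∂ν, p κ) : ∀ᵐ κ ∂ν, p (shf x κ) :=
  ((mpres ν hTI x).quasiMeasurePreserving.tendsto_ae).eventually hp

lemma integral_shift (hTI : TInv ν) (x : Fin d → ℤ) (f : Cfg d → ℝ) :
    ∫ κ, f (shf x κ) ∂ν = ∫ κ, f κ ∂ν :=
  (mpres ν hTI x).integral_comp (shfE x).measurableEmbedding f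

lemma erg_ae_const (hErg : Erg ν) {f : Cfg d → ℝ} (hf : Measurable f)
    (hinv : ∀ x, (fun κ => f (shf x κ)) =ᵐ[ν] f) :
    ∃ c : ℝ, f =ᵐ[ν] fun _ => c := by
  set A : ℝ → Set (Cfg d) := fun t => {κ | f κ ≤ t} with hA
  have mA : ∀ t, MeasurableSet (A t) := fun t => measurableSet_le hf measurable_const
  have hmono : ∀ {s t : ℝ}, s ≤ t → A s ⊆ A t := fun {s t} hst κ hκ => le_trans hκ hst
  -- 0-1 law for each level set
  have h01 : ∀ t : ℝ, ν (A t) = 0 ∨ ν (A t) = 1 := by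
    intro t
    have hAx : ∀ x, ν (A t \ shf x ⁻¹' (A t)) = 0 := by
      intro x
      rw [measure_eq_zero_iff_ae_notMem]
      filter_upwards [hinv x] with κ hκ
      rintro ⟨h1, h2⟩
      exact h2 (by simpa [A, Set.mem_preimage, hκ] using h1)
    set B : Set (Cfg d) := ⋂ x, shf x ⁻¹' (A t) with hB
    have mB : MeasurableSet B := MeasurableSet.iInter fun x => (measurable_shf x) (mA t)
    have hBinv : ∀ y, shf y ⁻¹' B = B := by
      intro y
      ext κ
      simp only [B, Set.mem_iInter, Set.mem_preimage]
      constructor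
      · intro h x
        have := h (x - y)
        rwa [shf_shf, sub_add_cancel] at this
      · intro h x
        rw [shf_shf]
        exact h (x + y)
    have hsub : B ⊆ A t := by
      intro κ hκ
      have := Set.mem_iInter.mp hκ 0
      rwa [Set.mem_preimage, shf_zero] at this
    have hdiff : ν (A t \ B) = 0 := by
      rw [hB, Set.diff_iInter]
      exact measure_iUnion_null fun x => hAx x
    have hνB : ν B = ν (A t) := by
      have := measure_inter_add_diff (μ := ν) (A t) mB
      rw [Set.inter_eq_self_of_subset_right hsub] at this
      rw [← this, hdiff, add_zero]
    rcases hErg B mB hBinv with h0 | h1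
    · left; rw [← hνB, h0]
    · right
      refine le_antisymm prob_le_one ?_
      rw [← h1, hνB]
  set S : Set ℝ := {t | ν (A t) = 1} with hS
  have hSne : S.Nonempty := by
    by_contra hemp
    have hz : ∀ t : ℝ, ν (A t) = 0 := by
      intro t
      rcases h01 t with h | h
      · exact h
      · exact absurd (⟨t, h⟩ : S.Nonempty) hemp
    have huniv : (⋃ n : ℕ, A n) = Set.univ := by
      ext κ
      simp only [Set.mem_iUnion, Set.mem_univ, iff_true]
      obtain ⟨n, hn⟩ := exists_nat_ge (f κ)
      exact ⟨n, hn⟩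
    have : ν (⋃ n : ℕ, A n) = 0 := measure_iUnion_null fun n => hz n
    rw [huniv, measure_univ] at this
    exact one_ne_zero this
  have hSbdd : BddBelow S := by
    have hlow : ∃ n : ℕ, ν (A (-(n : ℝ))) = 0 := by
      by_contra hno
      push_neg at hno
      have h1 : ∀ n : ℕ, ν ((A (-(n : ℝ)))ᶜ) = 0 := by
        intro n
        rcases h01 (-(n : ℝ)) with h | h
        · exact absurd h (hno n)
        · exact (prob_compl_eq_zero_iff (mA _)).mpr h
      have huniv : (⋃ n : ℕ, (A (-(n : ℝ)))ᶜ) = Set.univ := by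
        ext κ
        simp only [Set.mem_iUnion, Set.mem_compl_iff, Set.mem_univ, iff_true, A,
          Set.mem_setOf_eq, not_le]
        obtain ⟨n, hn⟩ := exists_nat_gt (-(f κ))
        exact ⟨n, by linarith⟩
      have : ν (⋃ n : ℕ, (A (-(n : ℝ)))ᶜ) = 0 := measure_iUnion_null h1
      rw [huniv, measure_univ] at this
      exact one_ne_zero this
    obtain ⟨n, hn⟩ := hlow
    refine ⟨-(n : ℝ), fun t ht => ?_⟩
    by_contra hlt
    push_neg at hlt
    have : ν (A t) = 0 := by
      refine le_antisymm ?_ (zero_le)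
      rw [← hn]
      exact measure_mono (hmono hlt.le)
    rw [hS] at ht
    simp only [Set.mem_setOf_eq] at ht
    rw [this] at ht
    exact one_ne_zero ht.symm
  set c := sInf S with hc
  have hge : ∀ t, c < t → ν (A t) = 1 := by
    intro t ht
    obtain ⟨s, hsS, hst⟩ := exists_lt_of_csInf_lt hSne ht
    refine le_antisymm prob_le_one ?_
    calc (1 : ℝ≥0∞) = ν (A s) := hsS.symm
    _ ≤ ν (A t) := measure_mono (hmono hst.le)
  have hlt : ∀ t, t < c → ν (A t) = 0 := by
    intro t ht
    rcases h01 t with h | h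
    · exact h
    · exact absurd (csInf_le hSbdd h) (not_le.mpr ht)
  refine ⟨c, ?_⟩
  have hlow : ∀ᵐ κ ∂ν, ¬ f κ < c := by
    have hcup : {κ | f κ < c} ⊆ ⋃ n : ℕ, A (c - 1 / (n + 1)) := by
      intro κ hκ
      obtain ⟨n, hn⟩ := exists_nat_one_div_lt (show (0:ℝ) < c - f κ by
        simpa using sub_pos.mpr (show f κ < c from hκ))
      exact Set.mem_iUnion.mpr ⟨n, by simp only [A, Set.mem_setOf_eq]; push_cast; linarith⟩
    have : ν {κ | f κ < c} = 0 :=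
      measure_mono_null hcup (measure_iUnion_null fun n => hlt _ (by
        have : (0:ℝ) < 1 / ((n:ℝ) + 1) := by positivity
        linarith))
    exact measure_eq_zero_iff_ae_notMem.mp this
  have hhigh : ∀ᵐ κ ∂ν, ¬ c < f κ := by
    have hcup : {κ | c < f κ} ⊆ ⋃ n : ℕ, (A (c + 1 / (n + 1)))ᶜ := by
      intro κ hκ
      obtain ⟨n, hn⟩ := exists_nat_one_div_lt (show (0:ℝ) < f κ - c by
        simpa using sub_pos.mpr (show c < f κ from hκ))
      refine Set.mem_iUnion.mpr ⟨n, ?_⟩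
      simp only [A, Set.mem_compl_iff, Set.mem_setOf_eq, not_le]
      push_cast
      linarith
    have : ν {κ | c < f κ} = 0 :=
      measure_mono_null hcup (measure_iUnion_null fun n =>
        (prob_compl_eq_zero_iff (mA _)).mpr (hge _ (by
          have : (0:ℝ) < 1 / ((n:ℝ) + 1) := by positivity
          linarith)))
    exact measure_eq_zero_iff_ae_notMem.mp this
  filter_upwards [hlow, hhigh] with κ h1 h2
  exact le_antisymm (not_lt.mp h2) (not_lt.mp h1)


section Hilbert

variable (hTI : TInv ν)

/-- The unitary shift operator on `L²(ν)`. -/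
def UU (x : Fin d → ℤ) : Lp ℝ 2 ν →ₗᵢ[ℝ] Lp ℝ 2 ν :=
  Lp.compMeasurePreservingₗᵢ ℝ (shf x) (mpres ν hTI x)

lemma UU_coeFn (x : Fin d → ℤ) (f : Lp ℝ 2 ν) :
    UU ν hTI x f =ᵐ[ν] fun κ => f (shf x κ) :=
  Lp.coeFn_compMeasurePreserving f (mpres ν hTI x)

lemma UU_comp (x y : Fin d → ℤ) (f : Lp ℝ 2 ν) :
    UU ν hTI x (UU ν hTI y f) = UU ν hTI (y + x) f := by
  apply Lp.ext
  have h1 := UU_coeFn ν hTI x (UU ν hTI y f)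
  have h2 : ∀ᵐ κ ∂ν, (UU ν hTI y f : Cfg d → ℝ) (shf x κ) = f (shf y (shf x κ)) :=
    ae_shift ν hTI x (UU_coeFn ν hTI y f)
  have h3 := UU_coeFn ν hTI (y + x) f
  filter_upwards [h1, h2, h3] with κ e1 e2 e3
  rw [e1, e2, e3, shf_shf]

lemma UU_zero (f : Lp ℝ 2 ν) : UU ν hTI 0 f = f := by
  apply Lp.ext
  filter_upwards [UU_coeFn ν hTI 0 f] with κ e1
  rw [e1, shf_zero]

lemma inner_UU (x : Fin d → ℤ) (f g : Lp ℝ 2 ν) :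
    ⟪UU ν hTI x f, UU ν hTI x g⟫ = ⟪f, g⟫ := by
  rw [L2.inner_def, L2.inner_def]
  rw [integral_congr_ae (by
    filter_upwards [UU_coeFn ν hTI x f, UU_coeFn ν hTI x g] with κ e1 e2
    rw [e1, e2] : (fun κ => (⟪(UU ν hTI x f : Cfg d → ℝ) κ, (UU ν hTI x g : Cfg d → ℝ) κ⟫ : ℝ))
      =ᵐ[ν] fun κ => ⟪f (shf x κ), g (shf x κ)⟫)]
  exact integral_shift ν hTI x fun κ => ⟪f κ, g κ⟫

lemma UU_adj (x : Fin d → ℤ) (f g : Lp ℝ 2 ν) :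
    ⟪UU ν hTI x f, g⟫ = ⟪f, UU ν hTI (-x) g⟫ := by
  conv_lhs => rw [show g = UU ν hTI x (UU ν hTI (-x) g) by
    rw [UU_comp, neg_add_cancel, UU_zero]]
  rw [inner_UU]

lemma inner_UU_right (x : Fin d → ℤ) (f g : Lp ℝ 2 ν) :
    ⟪f, UU ν hTI x g⟫ = ⟪UU ν hTI (-x) f, g⟫ := by
  rw [real_inner_comm, UU_adj, real_inner_comm]

/-- The constant function `1` as an element of `L²(ν)`. -/
def one : Lp ℝ 2 ν := (memLp_const (1:ℝ)).toLp _

lemma inner_one (f : Lp ℝ 2 ν) : ⟪one ν, f⟫ = ∫ κ, f κ ∂ν := by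
  rw [L2.inner_def]
  rw [integral_congr_ae (by
    filter_upwards [MemLp.coeFn_toLp (memLp_const (1:ℝ))] with κ e1
    rw [show (one ν : Cfg d → ℝ) κ = 1 from e1]
    simp [RCLike.inner_apply] :
    (fun κ => (⟪(one ν : Cfg d → ℝ) κ, f κ⟫ : ℝ)) =ᵐ[ν] fun κ => f κ)]

lemma inner_one_UU (x : Fin d → ℤ) (f : Lp ℝ 2 ν) :
    ⟪one ν, UU ν hTI x f⟫ = ⟪one ν, f⟫ := by
  rw [inner_one, inner_one,
    integral_congr_ae (UU_coeFn ν hTI x f), integral_shift ν hTI x]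

/-- The shift operator as a continuous linear map. -/
def Tc (x : Fin d → ℤ) : Lp ℝ 2 ν →L[ℝ] Lp ℝ 2 ν :=
  (UU ν hTI x).toContinuousLinearMap

/-- The discrete gradient in direction `j`. -/
def DD (j : Fin d) : Lp ℝ 2 ν →L[ℝ] Lp ℝ 2 ν :=
  Tc ν hTI (sv j 1) - ContinuousLinearMap.id ℝ _

lemma DD_apply (j : Fin d) (f : Lp ℝ 2 ν) :
    DD ν hTI j f = UU ν hTI (sv j 1) f - f := rfl

/-- Adjoint gradient. -/
def Dstar (j : Fin d) (f : Lp ℝ 2 ν) : Lp ℝ 2 ν :=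
  UU ν hTI (-(sv j 1)) f - f

lemma inner_DD_right (j : Fin d) (a b : Lp ℝ 2 ν) :
    ⟪a, DD ν hTI j b⟫ = ⟪Dstar ν hTI j a, b⟫ := by
  rw [DD_apply, Dstar, inner_sub_right, inner_sub_left, inner_UU_right]

lemma DD_Dstar_comm (j k : Fin d) (f : Lp ℝ 2 ν) :
    Dstar ν hTI j (DD ν hTI k f) = DD ν hTI k (Dstar ν hTI j f) := by
  simp only [Dstar, DD_apply, map_sub, UU_comp]
  rw [add_comm (sv k 1) (-(sv j 1))]
  try abel

lemma DD_comm (j k : Fin d) (f : Lp ℝ 2 ν) :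
    DD ν hTI j (DD ν hTI k f) = DD ν hTI k (DD ν hTI j f) := by
  simp only [DD_apply, map_sub, UU_comp]
  rw [add_comm (sv k 1) (sv j 1)]
  try abel

/-- Product Hilbert space. -/
abbrev Hd := PiLp 2 (fun _ : Fin d => Lp ℝ 2 ν)

instance : CompleteSpace (Hd ν) :=
  inferInstance

/-- Projection onto the `j`-th component. -/
def projC (j : Fin d) : Hd ν →L[ℝ] Lp ℝ 2 ν :=
  (ContinuousLinearMap.proj j).comp
    (PiLp.continuousLinearEquiv 2 ℝ (fun _ : Fin d => Lp ℝ 2 ν) :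
      Hd ν →L[ℝ] (∀ _ : Fin d, Lp ℝ 2 ν))

lemma projC_apply (j : Fin d) (u : Hd ν) : projC ν j u = u j := rfl

/-- The full gradient operator into the product space. -/
def Dop : Lp ℝ 2 ν →ₗ[ℝ] Hd ν where
  toFun := fun f => WithLp.toLp 2 (fun j => DD ν hTI j f)
  map_add' := fun f g => by ext j; simp [map_add]
  map_smul' := fun c f => by ext j; simp [_root_.map_smul]

lemma Dop_apply (f : Lp ℝ 2 ν) (j : Fin d) : Dop ν hTI f j = DD ν hTI j f := rfl

/-- The closure of the space of gradients. -/
def Kc : Submodule ℝ (Hd ν) := (LinearMap.range (Dop ν hTI)).topologicalClosure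

/-- Curl operator. -/
def curl (i j : Fin d) : Hd ν →L[ℝ] Lp ℝ 2 ν :=
  (DD ν hTI i).comp (projC ν j) - (DD ν hTI j).comp (projC ν i)

lemma curl_apply (i j : Fin d) (u : Hd ν) :
    curl ν hTI i j u = DD ν hTI i (u j) - DD ν hTI j (u i) := rfl

/-- The curl-free subspace. -/
def Wc : Submodule ℝ (Hd ν) :=
  ⨅ p : Fin d × Fin d, (curl ν hTI p.1 p.2).ker

lemma mem_Wc {u : Hd ν} :
    u ∈ Wc ν hTI ↔ ∀ i j, DD ν hTI i (u j) = DD ν hTI j (u i) := by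
  constructor
  · intro h i j
    have h' : curl ν hTI i j u = 0 := (Submodule.mem_iInf _).mp h (i, j)
    rw [curl_apply] at h'
    exact sub_eq_zero.mp h'
  · intro h
    rw [Wc, Submodule.mem_iInf]
    intro p
    show u ∈ (curl ν hTI p.1 p.2).ker
    rw [LinearMap.mem_ker]
    show curl ν hTI p.1 p.2 u = 0
    rw [curl_apply, sub_eq_zero]
    exact h p.1 p.2

lemma isClosed_Wc : IsClosed ((Wc ν hTI : Submodule ℝ (Hd ν)) : Set (Hd ν)) := by
  have he : ((Wc ν hTI : Submodule ℝ (Hd ν)) : Set (Hd ν))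
      = ⋂ q : Fin d × Fin d,
        (((curl ν hTI q.1 q.2).ker : Submodule ℝ (Hd ν)) : Set (Hd ν)) := by
    simp [Wc, Submodule.coe_iInf]
  rw [he]
  exact isClosed_iInter fun q => ContinuousLinearMap.isClosed_ker (curl ν hTI q.1 q.2)

lemma core (hErg : Erg ν) (h b : Fin d → Lp ℝ 2 ν)
    (hcurl : ∀ i j, DD ν hTI i (h j) = DD ν hTI j (h i))
    (hharm : ∑ j, (b j - UU ν hTI (-(sv j 1)) (b j)) = 0)
    (hmean : ∀ j, ⟪one ν, h j⟫ = 0) :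
    ∑ j, ⟪b j, h j⟫ = 0 := by
  classical
  haveI : CompleteSpace (Kc ν hTI) :=
    (Submodule.isClosed_topologicalClosure _).completeSpace_coe
  set hd : Hd ν := WithLp.toLp 2 (fun j => h j) with hhd
  set p : Hd ν := (Submodule.orthogonalProjection (Kc ν hTI) hd : Hd ν) with hpdef
  set r : Hd ν := hd - p with hrdef
  have hrK : r ∈ (Kc ν hTI)ᗮ := Submodule.sub_starProjection_mem_orthogonal hd
  have hDK : ∀ f, (Dop ν hTI f : Hd ν) ∈ Kc ν hTI := fun f =>
    Submodule.le_topologicalClosure _ (LinearMap.mem_range_self _ f)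
  have horth : ∀ f : Lp ℝ 2 ν, ∑ j, ⟪r j, DD ν hTI j f⟫ = 0 := by
    intro f
    have h0 : ⟪(Dop ν hTI f : Hd ν), r⟫ = 0 :=
      (Submodule.mem_orthogonal _ _).mp hrK _ (hDK f)
    rw [PiLp.inner_apply] at h0
    rw [← h0]
    exact Finset.sum_congr rfl fun j _ => real_inner_comm _ _
  have hdiv : ∑ j, Dstar ν hTI j (r j) = 0 := by
    have hz : ∀ f, ⟪∑ j, Dstar ν hTI j (r j), f⟫ = 0 := by
      intro f
      rw [sum_inner]
      have he : ∀ j ∈ Finset.univ, ⟪Dstar ν hTI j (r j), f⟫ = ⟪r j, DD ν hTI j f⟫ :=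
        fun j _ => (inner_DD_right ν hTI j (r j) f).symm
      rw [Finset.sum_congr rfl he]
      exact horth f
    exact inner_self_eq_zero.mp (hz _)
  have hKW : Kc ν hTI ≤ Wc ν hTI := by
    apply Submodule.topologicalClosure_minimal
    · rintro u ⟨f, rfl⟩
      exact (mem_Wc ν hTI).mpr fun i j => DD_comm ν hTI i j f
    · exact isClosed_Wc ν hTI
  have hWd : hd ∈ Wc ν hTI := (mem_Wc ν hTI).mpr fun i j => hcurl i j
  have hrW : r ∈ Wc ν hTI :=
    Submodule.sub_mem _ hWd (hKW (SetLike.coe_mem _))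
  have hrcurl : ∀ i j, DD ν hTI i (r j) = DD ν hTI j (r i) := (mem_Wc ν hTI).mp hrW
  have hDr : ∀ k j, DD ν hTI k (r j) = 0 := by
    have hsum : ∑ k, ∑ j, ⟪DD ν hTI k (r j), DD ν hTI k (r j)⟫ = 0 := by
      have hterm : ∀ k, ∑ j, ⟪DD ν hTI k (r j), DD ν hTI k (r j)⟫
          = ⟪DD ν hTI k (∑ j, Dstar ν hTI j (r j)), r k⟫ := by
        intro k
        rw [map_sum, sum_inner]
        refine Finset.sum_congr rfl fun j _ => ?_
        rw [← DD_Dstar_comm, ← inner_DD_right]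
        congr 1
        exact hrcurl k j
      rw [Finset.sum_congr rfl fun k _ => hterm k]
      simp [hdiv]
    have hkj : ∀ k ∈ Finset.univ, ∀ j ∈ (Finset.univ : Finset (Fin d)),
        ⟪DD ν hTI k (r j), DD ν hTI k (r j)⟫ = 0 := by
      have h1 := (Finset.sum_eq_zero_iff_of_nonneg (fun k _ =>
        Finset.sum_nonneg fun j _ => real_inner_self_nonneg)).mp hsum
      intro k hk j hj
      exact (Finset.sum_eq_zero_iff_of_nonneg fun j _ =>
        real_inner_self_nonneg).mp (h1 k hk) j hj
    intro k j
    exact inner_self_eq_zero.mp (hkj k (Finset.mem_univ k) j (Finset.mem_univ j))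
  -- each component of r is a.e. constant
  have hrconst : ∀ j, ∃ c : ℝ, (r j : Cfg d → ℝ) =ᵐ[ν] fun _ => c := by
    intro j
    have hsm := Lp.aestronglyMeasurable (r j)
    set f1 : Cfg d → ℝ := hsm.mk _ with hf1
    have hmk : (r j : Cfg d → ℝ) =ᵐ[ν] f1 := hsm.ae_eq_mk
    have hmeas : Measurable f1 := hsm.stronglyMeasurable_mk.measurable
    have hgen : ∀ k, (fun κ => f1 (shf (sv k 1) κ)) =ᵐ[ν] f1 := by
      intro k
      have h0 : UU ν hTI (sv k 1) (r j) = r j := by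
        have h1 := hDr k j
        rw [DD_apply, sub_eq_zero] at h1
        exact h1
      have h1 : (fun κ => (r j : Cfg d → ℝ) (shf (sv k 1) κ)) =ᵐ[ν] (r j : Cfg d → ℝ) := by
        have h2 := UU_coeFn ν hTI (sv k 1) (r j)
        rw [h0] at h2
        exact h2.symm
      have h3 : (fun κ => f1 (shf (sv k 1) κ))
          =ᵐ[ν] (fun κ => (r j : Cfg d → ℝ) (shf (sv k 1) κ)) := by
        filter_upwards [ae_shift ν hTI (sv k 1) hmk] with κ hκ using hκ.symm
      exact h3.trans (h1.trans hmk)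
    have hneg : ∀ k, (fun κ => f1 (shf (-(sv k 1)) κ)) =ᵐ[ν] f1 := by
      intro k
      have h1 := ae_shift ν hTI (-(sv k 1)) (hgen k)
      filter_upwards [h1] with κ hκ
      rw [shf_shf, add_neg_cancel, shf_zero] at hκ
      exact hκ.symm
    have hall : ∀ x, (fun κ => f1 (shf x κ)) =ᵐ[ν] f1 := by
      refine zd_induction ?_ ?_ ?_
      · have he : (fun κ => f1 (shf 0 κ)) = f1 := funext fun κ => by rw [shf_zero]
        rw [he]
      · intro x k hx
        have h1 := ae_shift ν hTI (sv k 1) hx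
        filter_upwards [h1, hgen k] with κ e1 e2
        have hs : shf (x + sv k 1) κ = shf x (shf (sv k 1) κ) := (shf_shf x (sv k 1) κ).symm
        rw [hs]
        exact e1.trans e2
      · intro x k hx
        have h1 := ae_shift ν hTI (-(sv k 1)) hx
        filter_upwards [h1, hneg k] with κ e1 e2
        have hs : shf (x - sv k 1) κ = shf x (shf (-(sv k 1)) κ) := by
          rw [shf_shf, sub_eq_add_neg]
        rw [hs]
        exact e1.trans e2
    obtain ⟨c, hc⟩ := erg_ae_const ν hErg hmeas hall
    exact ⟨c, hmk.trans hc⟩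
  -- mean zero on Kc
  have hmeanK : ∀ u, u ∈ Kc ν hTI → ∀ j, ⟪one ν, u j⟫ = 0 := by
    intro u hu j
    set ψ : Hd ν →L[ℝ] ℝ := (innerSL ℝ (one ν)).comp (projC ν j) with hψ
    have hker : Kc ν hTI ≤ ψ.ker := by
      apply Submodule.topologicalClosure_minimal
      · rintro u' ⟨f, rfl⟩
        show ψ (Dop ν hTI f) = 0
        have : ψ (Dop ν hTI f) = ⟪one ν, DD ν hTI j f⟫ := rfl
        rw [this, DD_apply, inner_sub_right, inner_one_UU]
        ring
      · exact ContinuousLinearMap.isClosed_ker ψ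
    have := hker hu
    rw [LinearMap.mem_ker] at this
    exact this
  have hrmean : ∀ j, ⟪one ν, r j⟫ = 0 := by
    intro j
    have hcomp : r j = hd j - p j := rfl
    rw [hcomp, inner_sub_right, hmean j, hmeanK p (SetLike.coe_mem _) j]
    ring
  -- conclude r = 0 and hd ∈ Kc
  have hrj0 : ∀ j, r j = (0 : Lp ℝ 2 ν) := by
    intro j
    obtain ⟨c, hc⟩ := hrconst j
    have hcval : ⟪one ν, r j⟫ = c := by
      rw [inner_one, integral_congr_ae hc]
      simp
    have hc0 : c = 0 := by rw [← hcval, hrmean j]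
    subst hc0
    apply Lp.ext
    exact hc.trans (Lp.coeFn_zero ℝ 2 ν).symm
  have hr0 : r = 0 := by
    have : ⟪r, r⟫ = 0 := by
      rw [PiLp.inner_apply]
      exact Finset.sum_eq_zero fun j _ => by rw [hrj0 j, inner_zero_left]
    exact inner_self_eq_zero.mp this
  have hhdK : hd ∈ Kc ν hTI := by
    have heq : hd = p := by
      have := hr0
      rw [hrdef, sub_eq_zero] at this
      exact this
    rw [heq, hpdef]
    exact SetLike.coe_mem _
  -- the harmonic functional vanishes on Kc
  set Φ : Hd ν →L[ℝ] ℝ := ∑ j, (innerSL ℝ (b j)).comp (projC ν j) with hΦ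
  have hΦapp : ∀ u : Hd ν, Φ u = ∑ j, ⟪b j, u j⟫ := by
    intro u
    rw [hΦ, ContinuousLinearMap.sum_apply]
    rfl
  have hΦker : Kc ν hTI ≤ Φ.ker := by
    apply Submodule.topologicalClosure_minimal
    · rintro u ⟨f, rfl⟩
      show Φ (Dop ν hTI f) = 0
      rw [hΦapp]
      have he : ∀ j ∈ Finset.univ, ⟪b j, (Dop ν hTI f) j⟫ = ⟪Dstar ν hTI j (b j), f⟫ :=
        fun j _ => inner_DD_right ν hTI j (b j) f
      rw [Finset.sum_congr rfl he, ← sum_inner]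
      have hz : ∑ j, Dstar ν hTI j (b j) = 0 := by
        have : ∑ j, Dstar ν hTI j (b j) = -∑ j, (b j - UU ν hTI (-(sv j 1)) (b j)) := by
          rw [← Finset.sum_neg_distrib]
          exact Finset.sum_congr rfl fun j _ => by rw [Dstar]; abel
        rw [this, hharm, neg_zero]
      rw [hz, inner_zero_left]
    · exact ContinuousLinearMap.isClosed_ker Φ
  have hΦ0 : Φ hd = 0 := by
    have := hΦker hhdK
    rwa [LinearMap.mem_ker] at this
  rw [hΦapp] at hΦ0
  exact hΦ0

end Hilbert

lemma coeFn_sum (s : Finset (Fin d)) (f : Fin d → Lp ℝ 2 ν) :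
    ((∑ i ∈ s, f i : Lp ℝ 2 ν) : Cfg d → ℝ) =ᵐ[ν] fun κ => ∑ i ∈ s, (f i : Cfg d → ℝ) κ := by
  induction s using Finset.cons_induction with
  | empty => simp only [Finset.sum_empty]; exact Lp.coeFn_zero ℝ 2 ν
  | cons i s hi ih =>
    have h1 := Lp.coeFn_add (f i) (∑ x ∈ s, f x)
    rw [Finset.sum_cons]
    filter_upwards [h1, ih] with κ e1 e2
    rw [e1]
    simp only [Pi.add_apply]
    rw [e2, Finset.sum_cons]

end HSC

open HSC

/-- Lemma: uniqueness of harmonic shift-covariant functions.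
Let `ν` be translation-invariant and ergodic on elliptic conductance
configurations.  If `g : Ω × ℤ^d → ℝ` is shift-covariant with `g(κ,0) = 0`,
harmonic (`L_κ g(κ,·) = 0` ν-a.s.), square integrable on the coordinate
directions, and has mean zero there, then `g(·,x) = 0` ν-a.s. for every `x`. -/
theorem harmonic_shift_covariant_zero_mean_vanishes
    (ν : Measure (Cfg d)) [IsProbabilityMeasure ν]
    (hTI : TInv ν) (hErg : Erg ν) (hEll : Elliptic ν)
    (g : Cfg d → (Fin d → ℤ) → ℝ)
    (hgm : ∀ x, Measurable fun κ => g κ x)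
    (hcov : ∀ᵐ κ ∂ν, g κ 0 = 0 ∧
      ∀ (x : Fin d → ℤ) (j : Fin d),
        g κ (x + sv j 1) - g κ x = g (shf x κ) (sv j 1))
    (hharm : ∀ᵐ κ ∂ν, ∀ x, Lgen κ (g κ) x = 0)
    (hg2 : ∀ j : Fin d, ∫⁻ κ, ENNReal.ofReal ((g κ (sv j 1)) ^ 2) ∂ν < ⊤)
    (hmean : ∀ j : Fin d, ∫ κ, g κ (sv j 1) ∂ν = 0) :
    ∀ x, ∀ᵐ κ ∂ν, g κ x = 0 := by
  classical
  obtain ⟨ε, hε, hEllae⟩ := hEll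
  -- the gradient components are in L²
  have memh : ∀ j : Fin d, MemLp (fun κ => g κ (sv j 1)) 2 ν := by
    intro j
    refine (memLp_two_iff_integrable_sq (hgm (sv j 1)).aestronglyMeasurable).mpr ?_
    refine ⟨((hgm (sv j 1)).pow_const 2).aestronglyMeasurable, ?_⟩
    rw [hasFiniteIntegral_iff_ofReal (Eventually.of_forall fun κ => sq_nonneg _)]
    exact hg2 j
  set hh : Fin d → Lp ℝ 2 ν := fun j => (memh j).toLp _ with hhdef
  have hhcoe : ∀ j, (hh j : Cfg d → ℝ) =ᵐ[ν] fun κ => g κ (sv j 1) :=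
    fun j => (memh j).coeFn_toLp
  -- the conductance-weighted gradients are in L²
  have memb : ∀ j : Fin d, MemLp (fun κ => κ ((0 : Fin d → ℤ), j) * g κ (sv j 1)) 2 ν := by
    intro j
    refine MemLp.of_le_mul (c := 1/ε) (memh j)
      (((measurable_pi_apply ((0 : Fin d → ℤ), j)).mul (hgm (sv j 1))).aestronglyMeasurable) ?_
    filter_upwards [hEllae] with κ hκ
    have h1 := (hκ ((0 : Fin d → ℤ), j)).1
    have h2 := (hκ ((0 : Fin d → ℤ), j)).2
    have habs : |κ ((0 : Fin d → ℤ), j)| ≤ 1/ε := by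
      rw [abs_le]
      constructor
      · have : (0:ℝ) < 1/ε := by positivity
        linarith
      · exact h2
    rw [norm_mul, Real.norm_eq_abs]
    exact mul_le_mul_of_nonneg_right habs (norm_nonneg _)
  set bb : Fin d → Lp ℝ 2 ν := fun j => (memb j).toLp _ with hbbdef
  have bbcoe : ∀ j, (bb j : Cfg d → ℝ) =ᵐ[ν] fun κ => κ ((0 : Fin d → ℤ), j) * g κ (sv j 1) :=
    fun j => (memb j).coeFn_toLp
  -- the curl-free property in L²
  have hcurl : ∀ i j, DD ν hTI i (hh j) = DD ν hTI j (hh i) := by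
    intro i j
    apply Lp.ext
    rw [DD_apply, DD_apply]
    have l1 := Lp.coeFn_sub (UU ν hTI (sv i 1) (hh j)) (hh j)
    have l2 := Lp.coeFn_sub (UU ν hTI (sv j 1) (hh i)) (hh i)
    have u1 := UU_coeFn ν hTI (sv i 1) (hh j)
    have u2 := UU_coeFn ν hTI (sv j 1) (hh i)
    have s1 := ae_shift ν hTI (sv i 1) (hhcoe j)
    have s2 := ae_shift ν hTI (sv j 1) (hhcoe i)
    filter_upwards [l1, l2, u1, u2, s1, s2, hcov, hhcoe i, hhcoe j]
      with κ e1 e2 e3 e4 e5 e6 hc e7 e8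
    obtain ⟨hc0, hcx⟩ := hc
    rw [e1, e2]
    simp only [Pi.sub_apply]
    rw [e3, e4, e5, e6, e7, e8, ← hcx (sv i 1) j, ← hcx (sv j 1) i,
      add_comm (sv j 1) (sv i 1)]
    ring
  -- harmonicity in L²
  have hharmL2 : ∑ j, (bb j - UU ν hTI (-(sv j 1)) (bb j)) = 0 := by
    apply Lp.ext
    have l0 := coeFn_sum ν Finset.univ (fun j => bb j - UU ν hTI (-(sv j 1)) (bb j))
    have key : ∀ᵐ κ ∂ν, ∑ j, (κ ((0 : Fin d → ℤ), j) * g κ (sv j 1)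
        - (shf (-(sv j 1)) κ) ((0 : Fin d → ℤ), j)
          * g (shf (-(sv j 1)) κ) (sv j 1)) = 0 := by
      filter_upwards [hharm, hcov] with κ hh1 hc
      obtain ⟨hc0, hcx⟩ := hc
      have h0 := hh1 0
      rw [Lgen] at h0
      have hterm : ∀ j : Fin d, κ ((0 : Fin d → ℤ), j) * g κ (sv j 1)
          - (shf (-(sv j 1)) κ) ((0 : Fin d → ℤ), j) * g (shf (-(sv j 1)) κ) (sv j 1)
          = κ ((0 : Fin d → ℤ), j) * (g κ ((0 : Fin d → ℤ) + sv j 1) - g κ 0)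
            + κ ((0 : Fin d → ℤ) - sv j 1, j)
              * (g κ ((0 : Fin d → ℤ) - sv j 1) - g κ 0) := by
        intro j
        have hgneg : g (shf (-(sv j 1)) κ) (sv j 1) = g κ 0 - g κ (-(sv j 1)) := by
          have := hcx (-(sv j 1)) j
          rw [neg_add_cancel] at this
          linarith
        have hsh : (shf (-(sv j 1)) κ) ((0 : Fin d → ℤ), j)
            = κ ((0 : Fin d → ℤ) - sv j 1, j) := by
          simp [shf, sub_eq_add_neg]
        rw [hgneg, hsh, hc0, zero_add]
        have hz0 : (0 : Fin d → ℤ) - sv j 1 = -(sv j 1) := by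
          funext i; simp
        rw [hz0]
        ring
      rw [Finset.sum_congr rfl fun j _ => hterm j]
      exact h0
    have cc : ∀ j : Fin d, ((bb j - UU ν hTI (-(sv j 1)) (bb j) : Lp ℝ 2 ν) : Cfg d → ℝ)
        =ᵐ[ν] fun κ => κ ((0 : Fin d → ℤ), j) * g κ (sv j 1)
          - (shf (-(sv j 1)) κ) ((0 : Fin d → ℤ), j)
            * g (shf (-(sv j 1)) κ) (sv j 1) := by
      intro j
      have l1 := Lp.coeFn_sub (bb j) (UU ν hTI (-(sv j 1)) (bb j))
      have u1 := UU_coeFn ν hTI (-(sv j 1)) (bb j)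
      have s1 := ae_shift ν hTI (-(sv j 1)) (bbcoe j)
      filter_upwards [l1, u1, s1, bbcoe j] with κ e1 e2 e3 e4
      rw [e1]
      simp only [Pi.sub_apply]
      rw [e2, e3, e4]
    have call : ∀ᵐ κ ∂ν, ∀ j : Fin d,
        ((bb j - UU ν hTI (-(sv j 1)) (bb j) : Lp ℝ 2 ν) : Cfg d → ℝ) κ
          = κ ((0 : Fin d → ℤ), j) * g κ (sv j 1)
            - (shf (-(sv j 1)) κ) ((0 : Fin d → ℤ), j)
              * g (shf (-(sv j 1)) κ) (sv j 1) := ae_all_iff.mpr cc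
    filter_upwards [l0, call, key, Lp.coeFn_zero ℝ 2 ν] with κ e0 e1 e2 e3
    rw [e0, Finset.sum_congr rfl fun j _ => e1 j, e2, e3]
    simp
  -- zero mean in L²
  have hmeanL2 : ∀ j, ⟪one ν, hh j⟫ = 0 := by
    intro j
    rw [inner_one, integral_congr_ae (hhcoe j)]
    exact hmean j
  -- the core Hilbert-space argument
  have hkey := core ν hTI hErg hh bb hcurl hharmL2 hmeanL2
  -- positivity and ellipticity
  have hips : ∀ j, ε * ⟪hh j, hh j⟫ ≤ ⟪bb j, hh j⟫ := by
    intro j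
    rw [L2.inner_def, L2.inner_def, ← integral_const_mul]
    apply integral_mono_ae
    · exact (L2.integrable_inner (𝕜 := ℝ) (hh j) (hh j)).const_mul ε
    · exact L2.integrable_inner (𝕜 := ℝ) (bb j) (hh j)
    · filter_upwards [hhcoe j, bbcoe j, hEllae] with κ e1 e2 e3
      simp only [RCLike.inner_apply, starRingEnd_apply, star_trivial]
      rw [e1, e2]
      have h1 := (e3 ((0 : Fin d → ℤ), j)).1
      nlinarith [sq_nonneg (g κ (sv j 1))]
  have hz : ∀ j, ⟪hh j, hh j⟫ = (0:ℝ) := by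
    have hnn : ∀ j ∈ Finset.univ, (0:ℝ) ≤ ε * ⟪hh j, hh j⟫ :=
      fun j _ => mul_nonneg hε.le real_inner_self_nonneg
    have hsumle : ∑ j, (ε * ⟪hh j, hh j⟫) ≤ ∑ j, ⟪bb j, hh j⟫ :=
      Finset.sum_le_sum fun j _ => hips j
    rw [hkey] at hsumle
    have hsum0 : ∑ j, (ε * ⟪hh j, hh j⟫) = 0 :=
      le_antisymm hsumle (Finset.sum_nonneg hnn)
    intro j
    have := (Finset.sum_eq_zero_iff_of_nonneg hnn).mp hsum0 j (Finset.mem_univ j)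
    rcases mul_eq_zero.mp this with h | h
    · exact absurd h (ne_of_gt hε)
    · exact h
  have hh0 : ∀ j : Fin d, ∀ᵐ κ ∂ν, g κ (sv j 1) = 0 := by
    intro j
    have hhz : hh j = 0 := inner_self_eq_zero.mp (hz j)
    have h0c : (hh j : Cfg d → ℝ) =ᵐ[ν] 0 := by
      rw [hhz]
      exact Lp.coeFn_zero ℝ 2 ν
    filter_upwards [(hhcoe j).symm.trans h0c] with κ e
    exact e
  -- propagate to all lattice points
  have hshift : ∀ᵐ κ ∂ν, ∀ (x : Fin d → ℤ) (j : Fin d), g (shf x κ) (sv j 1) = 0 := by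
    rw [ae_all_iff]
    intro x
    rw [ae_all_iff]
    intro j
    exact ae_shift ν hTI x (hh0 j)
  intro x
  filter_upwards [hcov, hshift] with κ hc hz2
  obtain ⟨hc0, hcx⟩ := hc
  refine zd_induction (P := fun y => g κ y = 0) hc0 ?_ ?_ x
  · intro y j hy
    have h1 := hcx y j
    rw [hz2 y j, hy] at h1
    linarith
  · intro y j hy
    have h1 := hcx (y - sv j 1) j
    rw [hz2 (y - sv j 1) j, sub_add_cancel, hy] at h1
    linarith
end
end
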